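/- arXiv:1601.03031 — 7 statements merged into one kernel-verified Lean document; each statement's English description precedes it below -/
import Mathlib

section
/- Splitting Lemma: Let U ⊆ ℍ be open and let f : U → ℍ be slice regular. Then for every I ∈ 𝕊 and every J ∈ 𝕊 orthogonal to I (as vectors in the 3-space of imaginary quaternions), there exist two holomorphic functions F, G : U ∩ ℂ_I → ℂ_I (i.e., satisfying (∂/∂x + I ∂/∂y)F = 0 and (∂/∂x + I ∂/∂y)G = 0 and taking values in ℂ_I) such that for every z = x + Iy ∈ U ∩ ℂ_I one has f(z) = F(z) + G(z)J. -/
open MeasureTheory Filter Set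
open scoped ENNReal

noncomputable section

notation "ℍ" => Quaternion ℝ

instance : MeasurableSpace ℍ := borel ℍ
instance : BorelSpace ℍ := ⟨rfl⟩

/-- The 2-sphere `𝕊` of imaginary units of `ℍ`. -/
def Sph : Set ℍ := {q | q ^ 2 = -1}

/-- The point `x + I y` of the slice `ℂ_I`, for `z = (x, y)`. -/
def toSlice (I : ℍ) (z : ℝ × ℝ) : ℍ := (z.1 : ℍ) + z.2 • I

/-- The slice (complex plane) `ℂ_I = {x + I y : x, y ∈ ℝ}`. -/
def CPlane (I : ℍ) : Set ℍ := Set.range (toSlice I)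

/-- `f` is (left) slice regular on the open set `U ⊆ ℍ`: it is real differentiable on `U`
and for every imaginary unit `I` its restriction to `U ∩ ℂ_I` satisfies
`(∂/∂x + I ∂/∂y) f(x + I y) = 0`. -/
def SliceRegularOn (f : ℍ → ℍ) (U : Set ℍ) : Prop :=
  (∀ q ∈ U, DifferentiableAt ℝ f q) ∧
  ∀ I ∈ Sph, ∀ q ∈ U ∩ CPlane I, fderiv ℝ f q 1 + I * fderiv ℝ f q I = 0

/-- `f` is holomorphic on the slice `U ∩ ℂ_J`: it is real differentiable there (as a function of
the slice coordinates `(x,y)`) and satisfies `(∂/∂x + J ∂/∂y) f(x + J y) = 0`. -/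
def HolOnSlice (f : ℍ → ℍ) (J : ℍ) (U : Set ℍ) : Prop :=
  ∀ z : ℝ × ℝ, toSlice J z ∈ U →
    DifferentiableAt ℝ (fun w => f (toSlice J w)) z ∧
    fderiv ℝ (fun w => f (toSlice J w)) z (1, 0)
      + J * fderiv ℝ (fun w => f (toSlice J w)) z (0, 1) = 0

/-- Axially symmetric subset of `ℍ`. -/
def AxSymm (U : Set ℍ) : Prop :=
  ∀ x y : ℝ, ∀ I ∈ Sph, (x : ℍ) + y • I ∈ U → ∀ J ∈ Sph, (x : ℍ) + y • J ∈ U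

/-- s-domain: a domain whose intersection with every slice `ℂ_I` is connected. -/
def IsSDomain (U : Set ℍ) : Prop :=
  IsOpen U ∧ IsConnected U ∧ ∀ I ∈ Sph, IsConnected (U ∩ CPlane I)

/-- The open unit ball `𝔹` of `ℍ`. -/
def B1 : Set ℍ := Metric.ball 0 1

/-- The point `r e^{Iθ} = r cos θ + (r sin θ) I`. -/
def circleQ (I : ℍ) (r θ : ℝ) : ℍ := ((r * Real.cos θ : ℝ) : ℍ) + (r * Real.sin θ) • I

/-- `∫_0^{2π} |f(r e^{Iθ})|^p dθ`. -/
def circIntP (f : ℍ → ℍ) (p : ℝ) (I : ℍ) (r : ℝ) : ℝ :=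
  ∫ θ in (0:ℝ)..(2 * Real.pi), ‖f (circleQ I r θ)‖ ^ p

/-- Membership in the Hardy space `H^p(𝔹)`: `f` is slice regular on `𝔹` and the limits as
`r → 1⁻` of `∫_0^{2π} |f(r e^{Iθ})|^p dθ` exist and are uniformly bounded over `I ∈ 𝕊`. -/
def HardyMem (f : ℍ → ℍ) (p : ℝ) : Prop :=
  SliceRegularOn f B1 ∧ ∃ M : ℝ, ∀ I ∈ Sph, ∃ L : ℝ, L ≤ M ∧
    Tendsto (fun r => circIntP f p I r) (nhdsWithin 1 (Set.Iio 1)) (nhds L)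

/-- `∥f∥_p^p = sup_{I ∈ 𝕊} lim_{r→1⁻} ∫_0^{2π} |f(r e^{Iθ})|^p dθ`. -/
def hardyNormP (f : ℍ → ℍ) (p : ℝ) : ℝ :=
  sSup {L | ∃ I ∈ Sph, Tendsto (fun r => circIntP f p I r) (nhdsWithin 1 (Set.Iio 1)) (nhds L)}

/-- `μ` is a Carleson measure for `H^p(𝔹)`. -/
def IsCarlesonHardy (μ : Measure ℍ) (p : ℝ) : Prop :=
  ∃ C : ℝ, 0 < C ∧ ∀ f : ℍ → ℍ, HardyMem f p →
    ∫⁻ q in B1, ENNReal.ofReal (‖f q‖ ^ p) ∂μ ≤ ENNReal.ofReal (C * hardyNormP f p)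

/-- `μ` is a slice Carleson measure for `H^p(𝔹)`: for every `I ∈ 𝕊`, the restriction `μ_I`
of `μ` to `𝔹_I = 𝔹 ∩ ℂ_I` satisfies the Carleson inequality. -/
def IsSliceCarlesonHardy (μ : Measure ℍ) (p : ℝ) : Prop :=
  ∃ C : ℝ, 0 < C ∧ ∀ I ∈ Sph, ∀ f : ℍ → ℍ, HardyMem f p →
    ∫⁻ q in B1 ∩ CPlane I, ENNReal.ofReal (‖f q‖ ^ p) ∂μ ≤ ENNReal.ofReal (C * hardyNormP f p)

/-- The Carleson box `S_I(θ₀, r) ⊆ 𝔹_I`. -/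
def carlesonBox (I : ℍ) (θ₀ r : ℝ) : Set ℍ :=
  {q | ∃ ρ θ : ℝ, r ≤ ρ ∧ ρ < 1 ∧ |θ - θ₀| ≤ 1 - r ∧ q = circleQ I ρ θ}

/-- The symmetric box `S(θ₀, r) = ⋃_{I ∈ 𝕊} S_I(θ₀, r)`. -/
def symmBox (θ₀ r : ℝ) : Set ℍ := ⋃ I ∈ Sph, carlesonBox I θ₀ r

/-- The open unit disc of `ℝ²` (parametrizing `𝔹_I`). -/
def unitDisc2 : Set (ℝ × ℝ) := {z | z.1 ^ 2 + z.2 ^ 2 < 1}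

/-- `∫_{𝔹_I} |f|^p dλ`, `λ` the 2-dimensional Lebesgue measure on `ℂ_I`. -/
def sliceIntP (f : ℍ → ℍ) (p : ℝ) (I : ℍ) : ℝ≥0∞ :=
  ∫⁻ z in unitDisc2, ENNReal.ofReal (‖f (toSlice I z)‖ ^ p)

/-- `∥f∥_{𝒜^p}^p = sup_{I ∈ 𝕊} ∫_{𝔹_I} |f|^p dλ`. -/
def bergNormP (f : ℍ → ℍ) (p : ℝ) : ℝ≥0∞ := ⨆ I ∈ Sph, sliceIntP f p I

/-- Membership in the Bergman space `𝒜^p(𝔹)`. -/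
def BergMem (f : ℍ → ℍ) (p : ℝ) : Prop := SliceRegularOn f B1 ∧ bergNormP f p < ⊤

/-- `μ` is a Carleson measure for `𝒜^p(𝔹)`. -/
def IsCarlesonBerg (μ : Measure ℍ) (p : ℝ) : Prop :=
  ∃ C : ℝ, 0 < C ∧ ∀ f : ℍ → ℍ, BergMem f p →
    ∫⁻ q in B1, ENNReal.ofReal (‖f q‖ ^ p) ∂μ ≤ ENNReal.ofReal C * bergNormP f p

/-- `μ` is a slice Carleson measure for `𝒜^p(𝔹)`. -/
def IsSliceCarlesonBerg (μ : Measure ℍ) (p : ℝ) : Prop :=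
  ∃ C : ℝ, 0 < C ∧ ∀ I ∈ Sph, ∀ f : ℍ → ℍ, BergMem f p →
    ∫⁻ q in B1 ∩ CPlane I, ENNReal.ofReal (‖f q‖ ^ p) ∂μ ≤ ENNReal.ofReal C * bergNormP f p

/-- The pseudohyperbolic distance
`ρ(q,α) = |(1 − 2Re(α)q + |α|²q²)⁻¹ (−α + q(1+α²) − q²α)| = |(1 − qᾱ)^{−*} * (q − α)|`. -/
def pRho (q α : ℍ) : ℝ :=
  ‖(1 - (2 * α.re) • q + (‖α‖ ^ 2) • q ^ 2)⁻¹ * (-α + q * (1 + α ^ 2) - q ^ 2 * α)‖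

/-- The pseudohyperbolic ball `B(α, r)`. -/
def pBall (α : ℍ) (r : ℝ) : Set ℍ := {q ∈ B1 | pRho q α < r}

/-- The pseudohyperbolic disc `Δ_I(α,r) = {z ∈ 𝔹_I : |z − α| < r |1 − zᾱ|}`. -/
def pDisc (I : ℍ) (α : ℍ) (r : ℝ) : Set ℍ :=
  {z | z ∈ B1 ∧ z ∈ CPlane I ∧ ‖z - α‖ < r * ‖1 - z * star α‖}

/-- The axially symmetric completion of a set `S ⊆ ℍ`. -/
def axComp (S : Set ℍ) : Set ℍ := {q | ∃ s ∈ S, q.re = s.re ∧ ‖q.im‖ = ‖s.im‖}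

/-- The 2-dimensional Lebesgue area, on the slice `ℂ_I`, of a subset of `ℂ_I`. -/
def sliceArea (I : ℍ) (S : Set ℍ) : ℝ≥0∞ := volume (toSlice I ⁻¹' S)

/-- The 4-dimensional Lebesgue measure on `ℍ ≅ ℝ⁴`. -/
def quatVol : Measure ℍ :=
  Measure.map (fun p : ℝ × ℝ × ℝ × ℝ => (⟨p.1, p.2.1, p.2.2.1, p.2.2.2⟩ : ℍ)) volume

/-- The 4-dimensional Lebesgue measure `η`, normalized so that `η(𝔹) = 1`. -/
def etaMeasure : Measure ℍ := (quatVol B1)⁻¹ • quatVol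

/-- The 2-sphere `[α]` of points with the same real part and the same modulus as `α`. -/
def qSphere (α : ℍ) : Set ℍ := {q | ∃ J ∈ Sph, q = (α.re : ℍ) + ‖α.im‖ • J}

/-- The 2-dimensional Lebesgue measure of the slice `ℂ_i`, restricted to `𝔹`,
regarded as a Borel measure on `ℍ`. -/
def sliceLeb (i : ℍ) : Measure ℍ := (Measure.map (toSlice i) volume).restrict B1

lemma sph_props {I : ℍ} (hI : I ∈ Sph) :
    I.re = 0 ∧ I.imI ^ 2 + I.imJ ^ 2 + I.imK ^ 2 = 1 ∧ I * I = -1 := by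
  have h2 : I * I = -1 := by rw [← sq]; exact hI
  have hre : (I * I).re = (-1 : ℍ).re := by rw [h2]
  have hi : (I * I).imI = (-1 : ℍ).imI := by rw [h2]
  have hj : (I * I).imJ = (-1 : ℍ).imJ := by rw [h2]
  have hk : (I * I).imK = (-1 : ℍ).imK := by rw [h2]
  rw [Quaternion.re_mul] at hre
  rw [Quaternion.imI_mul] at hi
  rw [Quaternion.imJ_mul] at hj
  rw [Quaternion.imK_mul] at hk
  simp [Quaternion.re_one, Quaternion.imI_one, Quaternion.imJ_one, Quaternion.imK_one] at hre hi hj hk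
  have hre0 : I.re = 0 := by
    nlinarith [sq_nonneg I.re, sq_nonneg I.imI, sq_nonneg I.imJ, sq_nonneg I.imK,
      sq_nonneg (I.re * I.imI), sq_nonneg (I.re * I.imJ), sq_nonneg (I.re * I.imK)]
  exact ⟨hre0, by nlinarith [hre0], h2⟩

lemma split1 {I : ℍ} (hre : I.re = 0) (h1 : I.imI ^ 2 + I.imJ ^ 2 + I.imK ^ 2 = 1) (q : ℍ) :
    (1/2 : ℝ) • (q - I * q * I) =
      toSlice I (q.re, q.imI * I.imI + q.imJ * I.imJ + q.imK * I.imK) := by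
  unfold toSlice
  ext
  · simp [Quaternion.re_mul, Quaternion.imI_mul, Quaternion.imJ_mul, Quaternion.imK_mul, hre]
    linear_combination (q.re / 2) * h1
  · simp [Quaternion.re_mul, Quaternion.imI_mul, Quaternion.imJ_mul, Quaternion.imK_mul, hre]
    linear_combination (-(q.imI) / 2) * h1
  · simp [Quaternion.re_mul, Quaternion.imI_mul, Quaternion.imJ_mul, Quaternion.imK_mul, hre]
    linear_combination (-(q.imJ) / 2) * h1
  · simp [Quaternion.re_mul, Quaternion.imI_mul, Quaternion.imJ_mul, Quaternion.imK_mul, hre]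
    linear_combination (-(q.imK) / 2) * h1

lemma mem_CPlane_of_conj {I : ℍ} (hre : I.re = 0)
    (h1 : I.imI ^ 2 + I.imJ ^ 2 + I.imK ^ 2 = 1) {u : ℍ} (h : I * u * I = -u) :
    u ∈ CPlane I := by
  have key : (1/2 : ℝ) • (u - I * u * I) = u := by rw [h]; module
  rw [← key, split1 hre h1]
  exact Set.mem_range_self _

lemma anticomm {I J : ℍ} (hreI : I.re = 0) (hreJ : J.re = 0)
    (hIJ : (I * star J).re = 0) : I * J + J * I = 0 := by
  rw [Quaternion.re_mul] at hIJ
  simp [hreI, hreJ] at hIJ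
  ext <;> simp [Quaternion.re_mul, Quaternion.imI_mul, Quaternion.imJ_mul, Quaternion.imK_mul,
    hreI, hreJ, Quaternion.re_zero, Quaternion.imI_zero, Quaternion.imJ_zero, Quaternion.imK_zero] <;> linarith [hIJ]

def auxT (I : ℍ) : (ℝ × ℝ) →L[ℝ] ℍ :=
  ((ContinuousLinearMap.fst ℝ ℝ ℝ).smulRight (1 : ℍ)) +
    ((ContinuousLinearMap.snd ℝ ℝ ℝ).smulRight I)

lemma auxT_apply (I : ℍ) : ⇑(auxT I) = toSlice I := by
  funext z
  show z.1 • (1:ℍ) + z.2 • I = toSlice I z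
  rw [toSlice, ← Quaternion.coe_one, Quaternion.smul_coe, mul_one]

def auxL1 (I : ℍ) : ℍ →L[ℝ] ℍ :=
  LinearMap.toContinuousLinearMap
    ((1/2 : ℝ) • (LinearMap.id - (LinearMap.mulRight ℝ I).comp (LinearMap.mulLeft ℝ I)))

lemma auxL1_apply (I q : ℍ) : auxL1 I q = (1/2 : ℝ) • (q - I * q * I) := by
  simp [auxL1, mul_assoc]

def auxL2 (I J : ℍ) : ℍ →L[ℝ] ℍ :=
  LinearMap.toContinuousLinearMap
    ((-(1/2) : ℝ) • ((LinearMap.mulRight ℝ J).comp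
      (LinearMap.id + (LinearMap.mulRight ℝ I).comp (LinearMap.mulLeft ℝ I))))

lemma auxL2_apply (I J q : ℍ) : auxL2 I J q = (-(1/2) : ℝ) • ((q + I * q * I) * J) := by
  simp [auxL2, mul_assoc]

lemma hol_of_comp {U : Set ℍ} {f : ℍ → ℍ} {I : ℍ} (L : ℍ →L[ℝ] ℍ)
    (hdiff : ∀ q ∈ U, DifferentiableAt ℝ f q)
    (hreg : ∀ q ∈ U ∩ CPlane I, fderiv ℝ f q 1 + I * fderiv ℝ f q I = 0)
    (hcomm : ∀ u v : ℍ, u + I * v = 0 → L u + I * L v = 0) :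
    HolOnSlice (fun q => L (f q)) I U := by
  intro z hz
  have hT : HasFDerivAt (toSlice I) (auxT I) z := by
    rw [← auxT_apply]; exact (auxT I).hasFDerivAt
  have hD : HasFDerivAt f (fderiv ℝ f (toSlice I z)) (toSlice I z) :=
    (hdiff _ hz).hasFDerivAt
  have hcompD : HasFDerivAt (fun w => f (toSlice I w))
      ((fderiv ℝ f (toSlice I z)).comp (auxT I)) z := hD.comp z hT
  have hFull : HasFDerivAt (fun w => L (f (toSlice I w)))
      (L.comp ((fderiv ℝ f (toSlice I z)).comp (auxT I))) z :=
    (L.hasFDerivAt).comp z hcompD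
  refine ⟨hFull.differentiableAt, ?_⟩
  show fderiv ℝ (fun w => L (f (toSlice I w))) z (1, 0)
      + I * fderiv ℝ (fun w => L (f (toSlice I w))) z (0, 1) = 0
  rw [hFull.fderiv]
  have e1 : auxT I (1, 0) = 1 := by rw [auxT_apply]; simp [toSlice]
  have e2 : auxT I (0, 1) = I := by rw [auxT_apply]; simp [toSlice]
  simp only [ContinuousLinearMap.comp_apply, e1, e2]
  exact hcomm _ _ (hreg _ ⟨hz, ⟨z, rfl⟩⟩)

/-- **Splitting Lemma.** If `f` is slice regular on an open set `U ⊆ ℍ`, then for every `I ∈ 𝕊`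
and every `J ∈ 𝕊` orthogonal to `I`, there are holomorphic functions `F, G : U ∩ ℂ_I → ℂ_I`
such that `f = F + G J` on `U ∩ ℂ_I`. -/
theorem splitting_lemma (U : Set ℍ) (hU : IsOpen U) (f : ℍ → ℍ)
    (hf : SliceRegularOn f U) (I : ℍ) (hI : I ∈ Sph) (J : ℍ) (hJ : J ∈ Sph)
    (hIJ : (I * star J).re = 0) :
    ∃ F G : ℍ → ℍ,
      HolOnSlice F I U ∧ HolOnSlice G I U ∧
      (∀ q ∈ U ∩ CPlane I, F q ∈ CPlane I) ∧
      (∀ q ∈ U ∩ CPlane I, G q ∈ CPlane I) ∧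
      ∀ q ∈ U ∩ CPlane I, f q = F q + G q * J := by
  obtain ⟨hdiff, hreg⟩ := hf
  obtain ⟨hreI, h1I, h2I⟩ := sph_props hI
  obtain ⟨hreJ, h1J, h2J⟩ := sph_props hJ
  have hanti : I * J + J * I = 0 := anticomm hreI hreJ hIJ
  have eJI : J * I = -(I * J) := eq_neg_of_add_eq_zero_right hanti
  have hw : ∀ x : ℍ, I * (x + I * x * I) * I = x + I * x * I := by
    intro x
    have e : I * (x + I * x * I) * I = I * x * I + (I * I) * x * (I * I) := by noncomm_ring
    rw [e, h2I]; noncomm_ring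
  have hkey : ∀ x : ℍ, I * ((x + I * x * I) * J) * I = -((x + I * x * I) * J) := by
    intro x
    have e1 : I * ((x + I * x * I) * J) * I = I * (x + I * x * I) * (J * I) := by noncomm_ring
    have e2 : I * (x + I * x * I) * -(I * J) = -(I * (x + I * x * I) * I * J) := by noncomm_ring
    rw [e1, eJI, e2, hw]
  refine ⟨fun q => auxL1 I (f q), fun q => auxL2 I J (f q), ?_, ?_, ?_, ?_, ?_⟩
  · refine hol_of_comp (auxL1 I) hdiff (hreg I hI) ?_
    intro u v h
    have hu : u = -(I * v) := eq_neg_of_add_eq_zero_left h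
    subst hu
    rw [auxL1_apply, auxL1_apply, mul_smul_comm, ← smul_add]
    have hz : -(I * v) - I * -(I * v) * I + I * (v - I * v * I) = 0 := by noncomm_ring
    rw [hz, smul_zero]
  · refine hol_of_comp (auxL2 I J) hdiff (hreg I hI) ?_
    intro u v h
    have hu : u = -(I * v) := eq_neg_of_add_eq_zero_left h
    subst hu
    rw [auxL2_apply, auxL2_apply, mul_smul_comm, ← smul_add]
    have hz : (-(I * v) + I * -(I * v) * I) * J + I * ((v + I * v * I) * J) = 0 := by
      noncomm_ring
    rw [hz, smul_zero]
  · intro q hq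
    show auxL1 I (f q) ∈ CPlane I
    rw [auxL1_apply, split1 hreI h1I]
    exact Set.mem_range_self _
  · intro q hq
    refine mem_CPlane_of_conj hreI h1I (u := auxL2 I J (f q)) ?_
    rw [auxL2_apply, mul_smul_comm, smul_mul_assoc, hkey, smul_neg]
  · intro q hq
    show f q = auxL1 I (f q) + auxL2 I J (f q) * J
    rw [auxL1_apply, auxL2_apply, smul_mul_assoc]
    have e3 : (f q + I * f q * I) * J * J = -(f q + I * f q * I) := by
      rw [mul_assoc, h2J, mul_neg_one]
    rw [e3]
    module


end
end

section
/- A function f : B(0,r) → ℍ on the Euclidean ball B(0,r) = {q ∈ ℍ : |q| < r} is slice regular if and only if there exists a sequence (a_n) of quaternions such that f(q) = Σ_{n=0}^∞ qⁿ a_n for all q ∈ B(0,r), the series converging uniformly on compact subsets of B(0,r); in that case a_n = (1/n!) ∂ⁿf/∂xⁿ(0). -/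
open MeasureTheory Filter Set
open scoped ENNReal

noncomputable section

open Filter Topology
open scoped ENNReal NNReal

noncomputable section

namespace SliceAux

theorem coe_eq_smul_one (x : ℝ) : (x : ℍ) = x • (1 : ℍ) := by
  rw [← Quaternion.coe_one, Quaternion.smul_coe, mul_one]

theorem re_eq_zero_of_sq {I : ℍ} (h : I * I = -1) : I.re = 0 := by
  have hre := congrArg QuaternionAlgebra.re h
  have hi := congrArg QuaternionAlgebra.imI h
  have hj := congrArg QuaternionAlgebra.imJ h
  have hk := congrArg QuaternionAlgebra.imK h
  simp [Quaternion.re_mul, Quaternion.imI_mul, Quaternion.imJ_mul, Quaternion.imK_mul,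
    Quaternion.re_one, Quaternion.imI_one, Quaternion.imJ_one, Quaternion.imK_one] at hre hi hj hk
  by_contra ha
  have hb : I.imI = 0 := by
    have h2 : I.re * I.imI = 0 := by linarith
    exact (mul_eq_zero.1 h2).resolve_left ha
  have hc : I.imJ = 0 := by
    have h2 : I.re * I.imJ = 0 := by linarith
    exact (mul_eq_zero.1 h2).resolve_left ha
  have hd : I.imK = 0 := by
    have h2 : I.re * I.imK = 0 := by linarith
    exact (mul_eq_zero.1 h2).resolve_left ha
  nlinarith [hre]

theorem norm_eq_one_of_sq {I : ℍ} (h : I * I = -1) : ‖I‖ = 1 := by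
  have h1 : ‖I‖ * ‖I‖ = 1 := by
    have := congrArg norm h
    rw [norm_mul] at this
    simpa using this
  nlinarith [norm_nonneg I]

theorem star_I {I : ℍ} (h : I * I = -1) : star I = -I :=
  Quaternion.star_eq_neg.2 (re_eq_zero_of_sq h)

/-- The embedding of `ℂ` into the slice `ℂ_I`. -/
def phi (I : ℍ) (z : ℂ) : ℍ := (z.re : ℍ) + z.im • I

theorem comm_coe (I : ℍ) (u : ℝ) : I * (u : ℍ) = (u : ℍ) * I :=
  (Quaternion.coe_commutes u I).symm

theorem phi_mul {I : ℍ} (h : I * I = -1) (z w : ℂ) :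
    phi I (z * w) = phi I z * phi I w := by
  simp only [phi, Complex.mul_re, Complex.mul_im, ← Quaternion.coe_mul_eq_smul]
  push_cast
  have c1 : ((z.im : ℍ) * I) * (w.re : ℍ) = (z.im : ℍ) * (w.re : ℍ) * I := by
    rw [mul_assoc, comm_coe, mul_assoc]
  have c2 : ((z.im : ℍ) * I) * ((w.im : ℍ) * I) = -((z.im : ℍ) * (w.im : ℍ)) := by
    rw [mul_assoc, ← mul_assoc I, comm_coe, mul_assoc, h, mul_neg_one, mul_neg]
  simp only [add_mul, mul_add]
  rw [c1, c2]
  noncomm_ring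

theorem phi_norm {I : ℍ} (h : I * I = -1) (z : ℂ) : ‖phi I z‖ = ‖z‖ := by
  have hns : phi I z * star (phi I z) = ((z.re ^ 2 + z.im ^ 2 : ℝ) : ℍ) := by
    have hs : star (phi I z) = (z.re : ℍ) - (z.im:ℍ) * I := by
      simp [phi, star_smul, star_I h, sub_eq_add_neg, ← Quaternion.coe_mul_eq_smul, mul_neg,
        comm_coe]
    rw [hs]
    simp only [phi, ← Quaternion.coe_mul_eq_smul]
    have c1 : ((z.im : ℍ) * I) * (z.re : ℍ) = (z.im : ℍ) * (z.re : ℍ) * I := by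
      rw [mul_assoc, comm_coe, mul_assoc]
    have c2 : ((z.im : ℍ) * I) * ((z.im : ℍ) * I) = -((z.im : ℍ) * (z.im : ℍ)) := by
      rw [mul_assoc, ← mul_assoc I, comm_coe, mul_assoc, h, mul_neg_one, mul_neg]
    have c3 : (z.im : ℍ) * (z.re : ℍ) = (z.re : ℍ) * (z.im : ℍ) := by
      rw [← Quaternion.coe_mul, ← Quaternion.coe_mul, mul_comm]
    simp only [add_mul, mul_sub, sub_mul]
    rw [c1, c2, c3]
    push_cast
    noncomm_ring
  have h3 : Quaternion.normSq (phi I z) = z.re ^ 2 + z.im ^ 2 :=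
    Quaternion.coe_injective <| by rw [← Quaternion.self_mul_star, hns]
  have habs : ‖z‖ * ‖z‖ = z.re ^ 2 + z.im ^ 2 := by
    have h5 := Complex.sq_norm z
    rw [Complex.normSq_apply] at h5
    nlinarith [h5]
  have h4 := Quaternion.normSq_eq_norm_mul_self (phi I z)
  rw [h3] at h4
  nlinarith [norm_nonneg (phi I z), norm_nonneg z, habs]

/-- `φ_I` as a ring hom `ℂ →+* ℍ`. -/
def sliceRingHom (I : ℍ) (h : I * I = -1) : ℂ →+* ℍ where
  toFun := phi I
  map_one' := by simp [phi]
  map_mul' := phi_mul h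
  map_zero' := by simp [phi]
  map_add' z w := by
    simp only [phi, ← Quaternion.coe_mul_eq_smul, Complex.add_re, Complex.add_im]
    push_cast
    noncomm_ring

theorem exists_slice (q : ℍ) : ∃ I : ℍ, I * I = -1 ∧ ∃ z : ℂ, phi I z = q := by
  by_cases h : q.im = 0
  · refine ⟨⟨0, 1, 0, 0⟩, ?_, (q.re : ℂ), ?_⟩
    · show (⟨0, 1, 0, 0⟩ : ℍ) * ⟨0, 1, 0, 0⟩ = -1
      ext <;> simp [Quaternion.re_mul, Quaternion.imI_mul, Quaternion.imJ_mul, Quaternion.imK_mul,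
        Quaternion.re_one, Quaternion.imI_one, Quaternion.imJ_one, Quaternion.imK_one]
    · simp only [phi, Complex.ofReal_re, Complex.ofReal_im, zero_smul, add_zero]
      conv_rhs => rw [← Quaternion.re_add_im q]
      rw [h, add_zero]
      exact (congrArg (fun x => (q.re : ℍ) + x) (zero_smul ℝ _)).trans (add_zero _)
  · set n : ℝ := ‖q.im‖ with hn
    have hn0 : 0 < n := by simpa [hn] using norm_pos_iff.2 h
    have hsq : q.im * q.im = -((Quaternion.normSq q.im : ℝ) : ℍ) := by
      have h1 : star q.im = -q.im := Quaternion.star_eq_neg.2 (Quaternion.re_im q)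
      have h2 := Quaternion.self_mul_star q.im
      rw [h1, mul_neg] at h2
      rw [← h2, neg_neg]
    have hns : Quaternion.normSq q.im = n * n := by
      rw [Quaternion.normSq_eq_norm_mul_self]
    refine ⟨n⁻¹ • q.im, ?_, ⟨q.re, n⟩, ?_⟩
    · rw [smul_mul_assoc, mul_smul_comm, smul_smul, hsq, hns]
      rw [smul_neg, Quaternion.smul_coe]
      have : n⁻¹ * n⁻¹ * (n * n) = 1 := by field_simp
      rw [this, Quaternion.coe_one]
    · show (q.re : ℍ) + n • n⁻¹ • q.im = q
      rw [smul_smul, mul_inv_cancel₀ (ne_of_gt hn0), one_smul, Quaternion.re_add_im]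
/-- The `ℂ`-module structure on `ℍ` induced by the slice `ℂ_I`. -/
def cmod (I : ℍ) (h : I * I = -1) : Module ℂ ℍ := Module.compHom ℍ (sliceRingHom I h)

theorem cmod_smul (I : ℍ) (h : I * I = -1) (z : ℂ) (q : ℍ) :
    (letI := cmod I h; z • q) = phi I z * q := rfl

/-- The `ℂ`-normed-space structure on `ℍ` induced by the slice `ℂ_I`. -/
def cns (I : ℍ) (h : I * I = -1) : @NormedSpace ℂ ℍ _ _ :=
  { toModule := cmod I h,
    norm_smul_le := fun z q => by
      rw [cmod_smul I h z q, norm_mul, phi_norm h] }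

theorem phi_real_smul (I : ℍ) (x : ℝ) (z : ℂ) : phi I (x • z) = x • phi I z := by
  simp [phi, Complex.real_smul, Complex.mul_re, Complex.mul_im, smul_add, smul_smul,
    Quaternion.smul_coe]

/-- Compatibility of the induced `ℂ`-action with the real scalar action. -/
def ctower (I : ℍ) (h : I * I = -1) : @IsScalarTower ℝ ℂ ℍ _ (cmod I h).toSMul _ := by
  letI := cmod I h
  refine ⟨fun x z q => ?_⟩
  show phi I (x • z) * q = x • (phi I z * q)
  rw [phi_real_smul, smul_mul_assoc]

/-- Coefficients of a real 1-dimensional power series are the Taylor coefficients. -/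
theorem coeff_eq {c : ℕ → ℍ} {g : ℝ → ℍ} {t : ℝ} (ht : 0 < t)
    (hsum : ∀ x : ℝ, |x| < t → HasSum (fun n => x ^ n • c n) (g x)) (n : ℕ) :
    c n = ((n.factorial : ℝ))⁻¹ • iteratedDeriv n g 0 := by
  have ht2 : |t/2| < t := by rw [abs_of_pos (by linarith)]; linarith
  obtain ⟨C, hC⟩ : ∃ C, ∀ m, ‖c m‖ * (t/2) ^ m ≤ C := by
    have h1 : Tendsto (fun m => ‖(t/2) ^ m • c m‖) atTop (nhds 0) := by
      simpa using ((hsum (t/2) ht2).summable.tendsto_atTop_zero).norm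
    obtain ⟨C, hC⟩ := h1.bddAbove_range
    refine ⟨C, fun m => ?_⟩
    have := hC (Set.mem_range_self m)
    rwa [norm_smul, norm_pow, Real.norm_eq_abs, abs_of_pos (by linarith : (0:ℝ) < t/2),
      mul_comm] at this
  set Q : FormalMultilinearSeries ℝ ℝ ℍ :=
    fun m => ContinuousMultilinearMap.mkPiRing ℝ (Fin m) (c m) with hQ
  have hQap : ∀ m (y : ℝ), Q m (fun _ => y) = y ^ m • c m := by
    intro m y
    rw [hQ]
    rw [ContinuousMultilinearMap.mkPiRing_apply]
    congr 1
    simp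
  have hball : HasFPowerSeriesOnBall g Q 0 (ENNReal.ofReal (t/2)) := by
    refine ⟨?_, by simp [ENNReal.ofReal_pos]; linarith, ?_⟩
    · have : ((t/2).toNNReal : ℝ≥0∞) = ENNReal.ofReal (t/2) := rfl
      rw [← this]
      apply Q.le_radius_of_bound C
      intro m
      rw [hQ]
      rw [ContinuousMultilinearMap.norm_mkPiRing, Real.coe_toNNReal _ (by linarith : (0:ℝ) ≤ t/2)]
      exact hC m
    · intro y hy
      rw [EMetric.mem_ball, edist_lt_ofReal, Real.dist_0_eq_abs] at hy
      have hy' : |y| < t := by linarith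
      have := hsum y hy'
      simp only [hQap]
      simpa using this
  have hfac := hball.factorial_smul (1:ℝ) n
  rw [hQap n (1:ℝ), one_pow, one_smul, ← iteratedDeriv_eq_iteratedFDeriv] at hfac
  rw [← hfac, ← Nat.cast_smul_eq_nsmul ℝ, smul_smul,
    inv_mul_cancel₀ (by exact_mod_cast n.factorial_ne_zero), one_smul]

theorem phi_add (I : ℍ) (z w : ℂ) : phi I (z + w) = phi I z + phi I w := by
  simp only [phi, Complex.add_re, Complex.add_im, add_smul]
  push_cast
  abel

/-- `φ_I` as a continuous `ℝ`-linear map. -/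
def phiL (I : ℍ) : ℂ →L[ℝ] ℍ :=
  LinearMap.toContinuousLinearMap
    { toFun := phi I, map_add' := phi_add I, map_smul' := phi_real_smul I }

@[simp] theorem phiL_apply (I : ℍ) (z : ℂ) : phiL I z = phi I z := rfl

theorem phi_coe (I : ℍ) (x : ℝ) : phi I ((x : ℂ)) = (x : ℍ) := by
  simp [phi]

theorem phi_pow {I : ℍ} (h : I * I = -1) (z : ℂ) (n : ℕ) :
    phi I (z ^ n) = phi I z ^ n :=
  map_pow (sliceRingHom I h) z n

theorem forward_hasSum {r : ℝ} (hr : 0 < r) {f : ℍ → ℍ}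
    (hdiff : ∀ q ∈ Metric.ball (0:ℍ) r, DifferentiableAt ℝ f q)
    (hCR : ∀ I : ℍ, I * I = -1 → ∀ x y : ℝ, (x:ℍ) + y • I ∈ Metric.ball (0:ℍ) r →
        fderiv ℝ f ((x:ℍ) + y • I) 1 + I * fderiv ℝ f ((x:ℍ) + y • I) I = 0)
    (q : ℍ) (hq : q ∈ Metric.ball (0:ℍ) r) :
    HasSum (fun n => q ^ n * (((n.factorial : ℝ))⁻¹ • iteratedDeriv n (fun x : ℝ => f (x:ℍ)) 0))
      (f q) := by
  obtain ⟨I, hI, z₀, hz₀⟩ := exists_slice q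
  letI := cns I hI
  letI := ctower I hI
  rw [mem_ball_zero_iff] at hq
  obtain ⟨ρ', hρ1, hρ2⟩ := exists_between hq
  set ρ : NNReal := ρ'.toNNReal with hρ
  have hρ0 : (0:ℝ) < ρ' := lt_of_le_of_lt (norm_nonneg q) hρ1
  have hρc : (ρ : ℝ) = ρ' := Real.coe_toNNReal _ hρ0.le
  have hρpos : 0 < ρ := by
    rw [← NNReal.coe_lt_coe, hρc]; exact hρ0
  -- complex differentiability of g on the closed ball
  set g : ℂ → ℍ := fun z => f (phiL I z) with hg
  have hdiffC : DifferentiableOn ℂ g (Metric.closedBall 0 ρ) := by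
    intro z hz
    rw [Metric.mem_closedBall, dist_zero_right] at hz
    have hq' : phi I z ∈ Metric.ball (0:ℍ) r := by
      rw [mem_ball_zero_iff, phi_norm hI]
      calc ‖z‖ ≤ ρ' := by rw [← hρc]; exact hz
        _ < r := hρ2
    set A := fderiv ℝ f (phi I z) with hA
    have hAder : HasFDerivAt g (A.comp (phiL I)) z :=
      ((hdiff _ hq').hasFDerivAt).comp z (phiL I).hasFDerivAt
    set d := A 1 with hd
    have hphiz : (↑z.re : ℍ) + z.im • I = phi I z := rfl
    have hCR' := hCR I hI z.re z.im (by rw [hphiz]; exact hq')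
    rw [hphiz] at hCR'
    have hAI : A I = I * d := by
      have h6 := congrArg (fun w => I * w) hCR'
      simp only [mul_add, ← mul_assoc, hI, neg_one_mul, mul_zero] at h6
      rw [← hA, ← hd] at h6
      symm
      rwa [add_neg_eq_zero] at h6
    set B : ℂ →L[ℂ] ℍ := ContinuousLinearMap.smulRight (ContinuousLinearMap.id ℂ ℂ) d with hB
    have hBA : B.restrictScalars ℝ = A.comp (phiL I) := by
      apply ContinuousLinearMap.ext
      intro w
      have hw : w = w.re • (1:ℂ) + w.im • Complex.I := by
        simp [Complex.real_smul]
      show (w : ℂ) • d = A (phiL I w)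
      show phi I w * d = A (phiL I w)
      have h8 : phiL I w = w.re • (1:ℍ) + w.im • I := by
        rw [phiL_apply]
        show (↑w.re : ℍ) + w.im • I = _
        rw [coe_eq_smul_one]
      rw [h8, map_add, _root_.map_smul, _root_.map_smul, ← hd, hAI]
      rw [phi]
      rw [add_mul, Quaternion.coe_mul_eq_smul, smul_mul_assoc]
    have h9 : HasFDerivAt g (B.restrictScalars ℝ) z := by rw [hBA]; exact hAder
    have hgC : HasFDerivAt (𝕜 := ℂ) g B z :=
      hasFDerivAt_iff_isLittleO.2 h9.isLittleO
    exact hgC.differentiableAt.differentiableWithinAt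
  -- power series via Cauchy theory
  have H := hdiffC.hasFPowerSeriesOnBall hρpos
  set P := cauchyPowerSeries g 0 ρ with hP
  set c : ℕ → ℍ := fun n => P n (fun _ => (1:ℂ)) with hc
  have hPap : ∀ (n : ℕ) (z : ℂ), P n (fun _ => z) = phi I z ^ n * c n := by
    intro n z
    have h1 : (fun _ : Fin n => z) = fun _ : Fin n => z • (1:ℂ) := by
      funext i; rw [smul_eq_mul, mul_one]
    rw [h1, ContinuousMultilinearMap.map_smul_univ]
    rw [Finset.prod_const, Finset.card_univ, Fintype.card_fin]
    rw [← phi_pow hI]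
    exact cmod_smul I hI _ _
  have hmem : ∀ x : ℝ, |x| < (ρ:ℝ) → (x:ℂ) ∈ Metric.eball (0:ℂ) ρ := by
    intro x hx
    rw [Metric.mem_eball, edist_zero_right, enorm_eq_nnnorm, ENNReal.coe_lt_coe, ← NNReal.coe_lt_coe, coe_nnnorm,
      Complex.norm_real, Real.norm_eq_abs]
    exact hx
  have hre : ∀ x : ℝ, |x| < (ρ:ℝ) → HasSum (fun n => x ^ n • c n) (f ((x:ℝ):ℍ)) := by
    intro x hx
    have h1 := H.hasSum (hmem x hx)
    rw [zero_add] at h1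
    have he : (fun n => P n (fun _ => (x:ℂ))) = fun n => x ^ n • c n := by
      funext n
      rw [hPap, phi_coe, ← Quaternion.coe_pow, Quaternion.coe_mul_eq_smul]
    rw [he] at h1
    have h3 : g ((x:ℂ)) = f ((x:ℝ):ℍ) := by
      show f (phi I _) = _
      rw [phi_coe]
    rwa [h3] at h1
  have hρR : (0:ℝ) < (ρ:ℝ) := by rw [hρc]; exact hρ0
  have hcoeff : ∀ n, c n = ((n.factorial : ℝ))⁻¹ • iteratedDeriv n (fun x : ℝ => f (x:ℍ)) 0 :=
    coeff_eq hρR hre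
  have hz₀mem : z₀ ∈ Metric.eball (0:ℂ) ρ := by
    rw [Metric.mem_eball, edist_zero_right, enorm_eq_nnnorm, ENNReal.coe_lt_coe, ← NNReal.coe_lt_coe, coe_nnnorm]
    rw [← phi_norm hI z₀, hz₀, hρc]
    exact hρ1
  have h1 := H.hasSum hz₀mem
  rw [zero_add] at h1
  have h2 : g z₀ = f q := by
    show f (phi I z₀) = f q
    rw [hz₀]
  rw [h2] at h1
  have h3 : (fun n => P n (fun _ => z₀)) = fun n => q ^ n * c n := by
    funext n; rw [hPap, hz₀]
  rw [h3] at h1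
  simp only [hcoeff] at h1
  exact h1

/-- Multiplication on the right as a continuous linear map. -/
def mulRightCLM (x : ℍ) : ℍ →L[ℝ] ℍ := (ContinuousLinearMap.mul ℝ ℍ).flip x

@[simp] theorem mulRightCLM_apply (x q : ℍ) : mulRightCLM x q = q * x := rfl

/-- The real formal multilinear series `Σ qⁿ aₙ`. -/
def Fser (a : ℕ → ℍ) : FormalMultilinearSeries ℝ ℍ ℍ := fun n =>
  (mulRightCLM (a n)).compContinuousMultilinearMap (ContinuousMultilinearMap.mkPiAlgebraFin ℝ n ℍ)

theorem Fser_apply (a : ℕ → ℍ) (n : ℕ) (q : ℍ) :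
    Fser a n (fun _ => q) = q ^ n * a n := by
  simp [Fser, ContinuousMultilinearMap.mkPiAlgebraFin_apply, List.ofFn_const, List.prod_replicate]

theorem Fser_norm (a : ℕ → ℍ) (n : ℕ) : ‖Fser a n‖ ≤ ‖a n‖ := by
  apply ContinuousMultilinearMap.opNorm_le_bound (norm_nonneg (a n))
  intro v
  have h1 : Fser a n v = (List.ofFn v).prod * a n := by
    simp [Fser, ContinuousMultilinearMap.mkPiAlgebraFin_apply]
  rw [h1, norm_mul, (List.ofFn v).norm_prod]
  have h2 : ((List.ofFn v).map norm).prod = ∏ i, ‖v i‖ := by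
    rw [List.map_ofFn, List.prod_ofFn]
    rfl
  rw [h2, mul_comm]

theorem coeff_bound {r t : ℝ} {f : ℍ → ℍ} {a : ℕ → ℍ}
    (ha : ∀ q ∈ Metric.ball (0:ℍ) r, HasSum (fun n => q ^ n * a n) (f q))
    (ht0 : 0 ≤ t) (htr : t < r) : ∃ C : ℝ, ∀ n, ‖a n‖ * t ^ n ≤ C := by
  have hmem : ((t:ℝ):ℍ) ∈ Metric.ball (0:ℍ) r := by
    rw [mem_ball_zero_iff, Quaternion.norm_coe, Real.norm_eq_abs, abs_of_nonneg ht0]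
    exact htr
  have h1 : Tendsto (fun n => ‖((t:ℝ):ℍ) ^ n * a n‖) atTop (nhds 0) := by
    simpa using ((ha _ hmem).summable.tendsto_atTop_zero).norm
  obtain ⟨C, hC⟩ := h1.bddAbove_range
  refine ⟨C, fun n => ?_⟩
  have := hC (Set.mem_range_self n)
  rwa [norm_mul, norm_pow, Quaternion.norm_coe, Real.norm_eq_abs, abs_of_nonneg ht0,
    mul_comm] at this

theorem mem_eball_ofReal {E : Type*} [SeminormedAddCommGroup E] {y : E} {r : ℝ} :
    y ∈ Metric.eball (0:E) (ENNReal.ofReal r) ↔ ‖y‖ < r := by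
  rw [Metric.mem_eball, edist_lt_ofReal, dist_zero_right]

theorem hasFPS {r : ℝ} {f : ℍ → ℍ} {a : ℕ → ℍ} (hr : 0 < r)
    (ha : ∀ q ∈ Metric.ball (0:ℍ) r, HasSum (fun n => q ^ n * a n) (f q)) :
    HasFPowerSeriesOnBall f (Fser a) 0 (ENNReal.ofReal r) := by
  refine ⟨?_, by simp [ENNReal.ofReal_pos]; exact hr, ?_⟩
  · apply ENNReal.le_of_forall_nnreal_lt
    intro t ht
    have ht' : (t:ℝ) < r := by
      rw [← ENNReal.ofReal_coe_nnreal, ENNReal.ofReal_lt_ofReal_iff hr] at ht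
      exact ht
    obtain ⟨C, hC⟩ := coeff_bound ha t.coe_nonneg ht'
    apply (Fser a).le_radius_of_bound C
    intro n
    calc ‖Fser a n‖ * (t:ℝ) ^ n ≤ ‖a n‖ * (t:ℝ) ^ n := by
          apply mul_le_mul_of_nonneg_right (Fser_norm a n) (pow_nonneg t.coe_nonneg n)
      _ ≤ C := hC n
  · intro y hy
    rw [mem_eball_ofReal] at hy
    have h1 := ha y (mem_ball_zero_iff.2 hy)
    rw [zero_add]
    simpa [Fser_apply] using h1

theorem backward {r : ℝ} {f : ℍ → ℍ} {a : ℕ → ℍ}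
    (ha : ∀ q ∈ Metric.ball (0:ℍ) r, HasSum (fun n => q ^ n * a n) (f q)) :
    (∀ q ∈ Metric.ball (0:ℍ) r, DifferentiableAt ℝ f q) ∧
    (∀ I : ℍ, I * I = -1 → ∀ z : ℂ, phi I z ∈ Metric.ball (0:ℍ) r →
      fderiv ℝ f (phi I z) 1 + I * fderiv ℝ f (phi I z) I = 0) := by
  by_cases hr : 0 < r
  swap
  · have hemp : Metric.ball (0:ℍ) r = ∅ := Metric.ball_eq_empty.2 (not_lt.1 hr)
    rw [hemp]
    exact ⟨fun q hq => absurd hq (Set.notMem_empty q),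
      fun I _ z hz => absurd hz (Set.notMem_empty _)⟩
  have hball := hasFPS hr ha
  have hdiff : ∀ q ∈ Metric.ball (0:ℍ) r, DifferentiableAt ℝ f q := by
    intro q hq
    exact (hball.analyticAt_of_mem (mem_eball_ofReal.2 (mem_ball_zero_iff.1 hq))).differentiableAt
  refine ⟨hdiff, ?_⟩
  intro I hI z hz
  letI := cns I hI
  letI := ctower I hI
  set P : FormalMultilinearSeries ℂ ℂ ℍ :=
    fun n => ContinuousMultilinearMap.mkPiRing ℂ (Fin n) (a n) with hP
  have hPap : ∀ (n : ℕ) (w : ℂ), P n (fun _ => w) = phi I w ^ n * a n := by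
    intro n w
    rw [hP]
    rw [ContinuousMultilinearMap.mkPiRing_apply, Finset.prod_const, Finset.card_univ,
      Fintype.card_fin, ← phi_pow hI]
    exact cmod_smul I hI _ _
  have hPball : HasFPowerSeriesOnBall (fun w => f (phi I w)) P 0 (ENNReal.ofReal r) := by
    refine ⟨?_, by simp [ENNReal.ofReal_pos]; exact hr, ?_⟩
    · apply ENNReal.le_of_forall_nnreal_lt
      intro t ht
      have ht' : (t:ℝ) < r := by
        rw [← ENNReal.ofReal_coe_nnreal, ENNReal.ofReal_lt_ofReal_iff hr] at ht
        exact ht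
      obtain ⟨C, hC⟩ := coeff_bound ha t.coe_nonneg ht'
      apply P.le_radius_of_bound C
      intro n
      rw [hP]
      rw [ContinuousMultilinearMap.norm_mkPiRing]
      exact hC n
    · intro y hy
      rw [mem_eball_ofReal] at hy
      have h1 := ha (phi I y) (by rw [mem_ball_zero_iff, phi_norm hI]; exact hy)
      rw [zero_add]
      simpa [hPap] using h1
  have hzmem : z ∈ Metric.eball (0:ℂ) (ENNReal.ofReal r) := by
    rw [mem_eball_ofReal, ← phi_norm hI]
    exact mem_ball_zero_iff.1 hz
  have hgd : DifferentiableAt ℂ (fun w => f (phi I w)) z :=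
    (hPball.analyticAt_of_mem hzmem).differentiableAt
  set D := fderiv ℂ (fun w => f (phi I w)) z with hD
  have hgR : HasFDerivAt (fun w => f (phi I w)) (D.restrictScalars ℝ) z :=
    (hgd.hasFDerivAt).restrictScalars ℝ
  set A := fderiv ℝ f (phi I z) with hA
  have hAder : HasFDerivAt (fun w => f (phi I w)) (A.comp (phiL I)) z :=
    ((hdiff _ hz).hasFDerivAt).comp z (phiL I).hasFDerivAt
  have huniq : A.comp (phiL I) = D.restrictScalars ℝ := hAder.unique hgR
  have hphi1 : phi I (1:ℂ) = 1 := by simp [phi]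
  have hphiI : phi I Complex.I = I := by simp [phi]
  have h1 : A 1 = D 1 := by
    have h := congrArg (fun L : ℂ →L[ℝ] ℍ => L 1) huniq
    simp only [ContinuousLinearMap.comp_apply, ContinuousLinearMap.coe_restrictScalars',
      phiL_apply] at h
    rwa [hphi1] at h
  have h2 : A I = I * D 1 := by
    have h := congrArg (fun L : ℂ →L[ℝ] ℍ => L Complex.I) huniq
    simp only [ContinuousLinearMap.comp_apply, ContinuousLinearMap.coe_restrictScalars',
      phiL_apply] at h
    rw [hphiI] at h
    have h3 : D Complex.I = I * D 1 := by
      have h4 : (Complex.I : ℂ) = Complex.I • (1:ℂ) := by simp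
      rw [h4, _root_.map_smul]
      exact (cmod_smul I hI _ _).trans (by rw [hphiI])
    rw [h, h3]
  rw [h1, h2, ← mul_assoc, hI, neg_one_mul]
  simp

theorem unif_conv {r : ℝ} {f : ℍ → ℍ} {a : ℕ → ℍ}
    (ha : ∀ q ∈ Metric.ball (0:ℍ) r, HasSum (fun n => q ^ n * a n) (f q))
    {K : Set ℍ} (hK : K ⊆ Metric.ball (0:ℍ) r) (hKc : IsCompact K) :
    TendstoUniformlyOn (fun N q => ∑ n ∈ Finset.range N, q ^ n * a n) f atTop K := by
  rcases K.eq_empty_or_nonempty with hKe | hKn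
  · rw [hKe]; exact tendstoUniformlyOn_empty
  obtain ⟨x₀, hx₀K, hx₀⟩ := hKc.exists_isMaxOn hKn (continuous_norm.continuousOn)
  set t : ℝ := ‖x₀‖ with htdef
  have ht0 : 0 ≤ t := norm_nonneg _
  have htr : t < r := mem_ball_zero_iff.1 (hK hx₀K)
  set t' : ℝ := (t + r) / 2 with ht'def
  have htt' : t < t' := by rw [ht'def]; linarith
  have ht'r : t' < r := by rw [ht'def]; linarith
  have ht'0 : 0 < t' := by linarith
  obtain ⟨C, hC⟩ := coeff_bound ha (by linarith : (0:ℝ) ≤ t') ht'r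
  have hC0 : 0 ≤ C := le_trans (by positivity) (hC 0)
  have hgeo : Summable (fun n => C * (t / t') ^ n) := by
    apply Summable.mul_left
    apply summable_geometric_of_lt_one (by positivity)
    rw [div_lt_one ht'0]
    exact htt'
  have hfu : ∀ (n : ℕ) (x : ℍ), x ∈ K → ‖x ^ n * a n‖ ≤ C * (t / t') ^ n := by
    intro n x hx
    rw [norm_mul, norm_pow]
    have hxt : ‖x‖ ≤ t := hx₀ hx
    calc ‖x‖ ^ n * ‖a n‖ ≤ t ^ n * ‖a n‖ := by
          apply mul_le_mul_of_nonneg_right (pow_le_pow_left₀ (norm_nonneg x) hxt n) (norm_nonneg _)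
      _ = (t / t') ^ n * (‖a n‖ * t' ^ n) := by
          rw [div_pow]
          field_simp
      _ ≤ (t / t') ^ n * C := by
          apply mul_le_mul_of_nonneg_left (hC n) (by positivity)
      _ = C * (t / t') ^ n := mul_comm _ _
  have := tendstoUniformlyOn_tsum_nat hgeo hfu
  apply this.congr_right
  intro x hx
  exact ((ha x (hK hx)).tsum_eq)

end SliceAux
end


/-- A function on the Euclidean ball `B(0,r) ⊆ ℍ` is slice regular if and only if it is the sum
of a power series `Σ qⁿ aₙ` converging uniformly on compact subsets of the ball; in that case
`aₙ = (1/n!) ∂ⁿf/∂xⁿ(0)`. -/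
theorem power_series_representation (r : ℝ) (hr : 0 < r) (f : ℍ → ℍ) :
    (SliceRegularOn f (Metric.ball 0 r) ↔
      ∃ a : ℕ → ℍ,
        (∀ q ∈ Metric.ball (0 : ℍ) r, HasSum (fun n => q ^ n * a n) (f q)) ∧
        (∀ K ⊆ Metric.ball (0 : ℍ) r, IsCompact K →
          TendstoUniformlyOn (fun N q => ∑ n ∈ Finset.range N, q ^ n * a n) f atTop K)) ∧
    (SliceRegularOn f (Metric.ball 0 r) →
      ∀ a : ℕ → ℍ, (∀ q ∈ Metric.ball (0 : ℍ) r, HasSum (fun n => q ^ n * a n) (f q)) →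
        ∀ n : ℕ, a n = ((n.factorial : ℝ))⁻¹ • iteratedDeriv n (fun x : ℝ => f (x : ℍ)) 0) := by
  constructor
  · constructor
    · rintro ⟨hdiff, hCR⟩
      have hCR' : ∀ I : ℍ, I * I = -1 → ∀ x y : ℝ, (x:ℍ) + y • I ∈ Metric.ball (0:ℍ) r →
          fderiv ℝ f ((x:ℍ) + y • I) 1 + I * fderiv ℝ f ((x:ℍ) + y • I) I = 0 := by
        intro I hI x y hxy
        have hSph : I ∈ Sph := by
          show I ^ 2 = -1
          rw [sq]
          exact hI
        exact hCR I hSph _ ⟨hxy, ⟨(x, y), rfl⟩⟩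
      have hsum : ∀ q ∈ Metric.ball (0:ℍ) r,
          HasSum (fun n => q ^ n *
            (((n.factorial : ℝ))⁻¹ • iteratedDeriv n (fun x : ℝ => f (x:ℍ)) 0)) (f q) :=
        fun q hq => SliceAux.forward_hasSum hr hdiff hCR' q hq
      exact ⟨_, hsum, fun K hK hKc => SliceAux.unif_conv hsum hK hKc⟩
    · rintro ⟨a, hsum, -⟩
      obtain ⟨hd, hcr⟩ := SliceAux.backward hsum
      refine ⟨hd, ?_⟩
      rintro I hISph q ⟨hqb, ⟨zp, hzp⟩⟩
      have hImul : I * I = -1 := by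
        rw [← sq]
        exact hISph
      have hphiq : SliceAux.phi I ⟨zp.1, zp.2⟩ = q := by
        rw [← hzp]
        rfl
      have hq' : SliceAux.phi I ⟨zp.1, zp.2⟩ ∈ Metric.ball (0:ℍ) r := by
        rw [hphiq]
        exact hqb
      have h := hcr I hImul ⟨zp.1, zp.2⟩ hq'
      rwa [hphiq] at h
  · intro _ a hsum n
    apply SliceAux.coeff_eq hr
    intro x hx
    have h1 := hsum ((x:ℝ):ℍ) (by
      rw [mem_ball_zero_iff, Quaternion.norm_coe, Real.norm_eq_abs]
      exact hx)
    have h2 : (fun n => ((x:ℝ):ℍ) ^ n * a n) = fun n => x ^ n • a n := by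
      funext m
      rw [← Quaternion.coe_pow, Quaternion.coe_mul_eq_smul]
    rwa [h2] at h1

end
end

section
/- Representation Formula: Let f be a slice regular function on an axially symmetric s-domain U ⊆ ℍ, let J ∈ 𝕊, and suppose x ± Jy ∈ U ∩ ℂ_J. Then for every I ∈ 𝕊 one has f(x + Iy) = ½[f(x + Jy) + f(x − Jy)] + I·½[J(f(x − Jy) − f(x + Jy))] = ½(1 − IJ) f(x + Jy) + ½(1 + IJ) f(x − Jy). -/
open MeasureTheory Filter Set
open scoped ENNReal

noncomputable section

lemma sph_mul_self {I : ℍ} (hI : I ∈ Sph) : I * I = -1 := by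
  have h : I ^ 2 = -1 := hI
  rwa [sq] at h

lemma neg_mem_sph {I : ℍ} (hI : I ∈ Sph) : -I ∈ Sph := by
  have h : I ^ 2 = -1 := hI
  show (-I) ^ 2 = -1
  rwa [neg_sq]

lemma sph_re {I : ℍ} (hI : I ∈ Sph) : I.re = 0 := by
  have h := sph_mul_self hI
  have h1 : (I * I).re = -1 := by rw [h]; simp; exact Quaternion.re_one
  have h2 : (I * I).imI = 0 := by rw [h]; simp; exact Quaternion.imI_one
  have h3 : (I * I).imJ = 0 := by rw [h]; simp; exact Quaternion.imJ_one
  have h4 : (I * I).imK = 0 := by rw [h]; simp; exact Quaternion.imK_one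
  rw [Quaternion.re_mul] at h1
  rw [Quaternion.imI_mul] at h2
  rw [Quaternion.imJ_mul] at h3
  rw [Quaternion.imK_mul] at h4
  by_contra hne
  have hb : I.imI = 0 := by
    have : I.re * I.imI = 0 := by nlinarith
    exact (mul_eq_zero.mp this).resolve_left hne
  have hc : I.imJ = 0 := by
    have : I.re * I.imJ = 0 := by nlinarith
    exact (mul_eq_zero.mp this).resolve_left hne
  have hd : I.imK = 0 := by
    have : I.re * I.imK = 0 := by nlinarith
    exact (mul_eq_zero.mp this).resolve_left hne
  rw [hb, hc, hd] at h1
  nlinarith [sq_nonneg I.re]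

lemma sph_star {I : ℍ} (hI : I ∈ Sph) : star I = -I := by
  apply Quaternion.ext <;> simp [sph_re hI]

def rhoA (I : ℍ) (hI : I ∈ Sph) : ℂ →ₐ[ℝ] ℍ := Complex.liftAux I (sph_mul_self hI)

lemma rhoA_apply {I : ℍ} (hI : I ∈ Sph) (z : ℂ) :
    rhoA I hI z = (z.re : ℍ) + z.im • I := by
  simp [rhoA, Complex.liftAux_apply, Quaternion.algebraMap_def]

lemma rhoA_star {I : ℍ} (hI : I ∈ Sph) (z : ℂ) :
    star (rhoA I hI z) = rhoA I hI ((starRingEnd ℂ) z) := by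
  simp [rhoA_apply hI, star_smul, sph_star hI, smul_neg, neg_smul]

lemma rhoA_norm {I : ℍ} (hI : I ∈ Sph) (z : ℂ) : ‖rhoA I hI z‖ = ‖z‖ := by
  have h1 : rhoA I hI z * star (rhoA I hI z) = ((Complex.normSq z : ℝ) : ℍ) := by
    rw [rhoA_star hI, ← map_mul, Complex.mul_conj, rhoA_apply hI]
    simp
  have h2 : ‖rhoA I hI z‖ * ‖rhoA I hI z‖ = ‖z‖ * ‖z‖ := by
    calc ‖rhoA I hI z‖ * ‖rhoA I hI z‖
        = ‖rhoA I hI z‖ * ‖star (rhoA I hI z)‖ := by rw [norm_star]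
      _ = ‖rhoA I hI z * star (rhoA I hI z)‖ := (norm_mul _ _).symm
      _ = |Complex.normSq z| := by rw [h1, Quaternion.norm_coe]; exact Real.norm_eq_abs _
      _ = ‖z‖ * ‖z‖ := by
          rw [abs_of_nonneg (Complex.normSq_nonneg z), Complex.normSq_eq_norm_sq]
          ring
  nlinarith [norm_nonneg (rhoA I hI z), norm_nonneg z]

def phiCLM (I : ℍ) : ℂ →L[ℝ] ℍ :=
  Complex.reCLM.smulRight (1 : ℍ) + Complex.imCLM.smulRight I

lemma phiCLM_apply (I : ℍ) (z : ℂ) : phiCLM I z = (z.re : ℍ) + z.im • I := by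
  have h : z.re • (1 : ℍ) = (z.re : ℍ) := by rw [← Quaternion.coe_mul_eq_smul, mul_one]
  simp [phiCLM, h]

lemma phiCLM_one (I : ℍ) : phiCLM I (1 : ℂ) = 1 := by simp [phiCLM_apply]

lemma phiCLM_I (I : ℍ) : phiCLM I Complex.I = I := by simp [phiCLM_apply]

lemma sph_sum {I : ℍ} (hI : I ∈ Sph) : I.imI ^ 2 + I.imJ ^ 2 + I.imK ^ 2 = 1 := by
  have h := sph_mul_self hI
  have h1 : (I * I).re = -1 := by rw [h]; simp; exact Quaternion.re_one
  rw [Quaternion.re_mul] at h1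
  have h0 := sph_re hI
  nlinarith [h1, h0]

lemma slice_identity {I : ℍ} (hI : I ∈ Sph) {V : Set ℂ} (hVo : IsOpen V)
    (hVc : IsPreconnected V) {u v : ℂ → ℍ}
    (hu : ∀ z ∈ V, DifferentiableAt ℝ u z ∧ fderiv ℝ u z Complex.I = I * fderiv ℝ u z 1)
    (hv : ∀ z ∈ V, DifferentiableAt ℝ v z ∧ fderiv ℝ v z Complex.I = I * fderiv ℝ v z 1)
    {z₀ : ℂ} (hz₀ : z₀ ∈ V) (hfreq : ∃ᶠ z in nhdsWithin z₀ {z₀}ᶜ, u z = v z) :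
    Set.EqOn u v V := by
  letI md : Module ℂ ℍ := Module.compHom ℍ (rhoA I hI).toRingHom
  have hsmul : ∀ (z : ℂ) (q : ℍ), z • q = rhoA I hI z * q := fun _ _ => rfl
  letI st : IsScalarTower ℝ ℂ ℍ :=
    ⟨fun r z q => by rw [hsmul, hsmul, _root_.map_smul, smul_mul_assoc]⟩
  letI ns : NormedSpace ℂ ℍ :=
    { toModule := md
      norm_smul_le := fun z q => by rw [hsmul, norm_mul, rhoA_norm hI] }
  have key : ∀ w : ℂ → ℍ,
      (∀ z ∈ V, DifferentiableAt ℝ w z ∧ fderiv ℝ w z Complex.I = I * fderiv ℝ w z 1) →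
      DifferentiableOn ℂ w V := by
    intro w hw z hz
    obtain ⟨hdiff, hCR⟩ := hw z hz
    set D := fderiv ℝ w z with hD
    set c0 := D 1 with hc0
    have hlin : IsLinearMap ℂ (fun t : ℂ => t • c0) :=
      ⟨fun a b => add_smul a b c0, fun a b => by rw [smul_eq_mul, mul_smul]⟩
    set L : ℂ →L[ℂ] ℍ := LinearMap.mkContinuous (IsLinearMap.mk' _ hlin) ‖c0‖ (fun t => by
      show ‖t • c0‖ ≤ ‖c0‖ * ‖t‖
      rw [hsmul, norm_mul, rhoA_norm hI]
      exact le_of_eq (mul_comm _ _)) with hL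
    have hLapp : ∀ t : ℂ, L t = t • c0 := fun t => rfl
    have hres : L.restrictScalars ℝ = D := by
      apply ContinuousLinearMap.ext
      intro t
      have e1 : (t.re : ℂ) = t.re • (1 : ℂ) := by rw [Complex.real_smul, mul_one]
      have e2 : (t.im : ℂ) * Complex.I = t.im • Complex.I := Complex.real_smul.symm
      calc (L.restrictScalars ℝ) t = t • c0 := rfl
        _ = rhoA I hI t * c0 := hsmul t c0
        _ = ((t.re : ℍ) + t.im • I) * c0 := by rw [rhoA_apply hI]
        _ = t.re • c0 + t.im • (I * c0) := by
              rw [add_mul, Quaternion.coe_mul_eq_smul, smul_mul_assoc]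
        _ = t.re • D 1 + t.im • D Complex.I := by rw [← hCR, ← hc0]
        _ = D (t.re • (1 : ℂ) + t.im • Complex.I) := by rw [map_add, _root_.map_smul, _root_.map_smul]
        _ = D t := by rw [← e1, ← e2, Complex.re_add_im]
    have : HasFDerivAt w L z :=
      hasFDerivAt_of_restrictScalars ℝ hdiff.hasFDerivAt hres
    exact this.differentiableAt.differentiableWithinAt
  have hu' := (key u hu).analyticOnNhd hVo
  have hv' := (key v hv).analyticOnNhd hVo
  exact hu'.eqOn_of_preconnected_of_frequently_eq hv' hVc hz₀ hfreq

set_option maxHeartbeats 1000000 in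
set_option synthInstance.maxHeartbeats 400000 in
/-- **Representation Formula.** For `f` slice regular on an axially symmetric s-domain `U`,
`J ∈ 𝕊` and `x ± Jy ∈ U`, one has, for every `I ∈ 𝕊`,
`f(x+Iy) = ½[f(x+Jy)+f(x−Jy)] + I·½[J(f(x−Jy)−f(x+Jy))] = ½(1−IJ)f(x+Jy) + ½(1+IJ)f(x−Jy)`. -/
theorem representation_formula (U : Set ℍ) (hsym : AxSymm U) (hsd : IsSDomain U)
    (f : ℍ → ℍ) (hf : SliceRegularOn f U) (J : ℍ) (hJ : J ∈ Sph) (x y : ℝ)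
    (hp : (x : ℍ) + y • J ∈ U) (hm : (x : ℍ) - y • J ∈ U) :
    ∀ I ∈ Sph,
      f ((x : ℍ) + y • I) =
          (2 : ℝ)⁻¹ • (f ((x : ℍ) + y • J) + f ((x : ℍ) - y • J))
            + I * ((2 : ℝ)⁻¹ • (J * (f ((x : ℍ) - y • J) - f ((x : ℍ) + y • J)))) ∧
      f ((x : ℍ) + y • I) =
          (2 : ℝ)⁻¹ • ((1 - I * J) * f ((x : ℍ) + y • J))
            + (2 : ℝ)⁻¹ • ((1 + I * J) * f ((x : ℍ) - y • J)) := by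
  intro I hI
  obtain ⟨hUo, hUconn, hUslice⟩ := hsd
  obtain ⟨hfd, hfCR⟩ := hf
  have hJJ : J * J = -1 := sph_mul_self hJ
  have hII : I * I = -1 := sph_mul_self hI
  set V : Set ℂ := (phiCLM J) ⁻¹' U with hV
  have hmemV : ∀ z : ℂ, z ∈ V → ∀ K, K ∈ Sph → (z.re : ℍ) + z.im • K ∈ U := by
    intro z hz K hK
    have h0 : (z.re : ℍ) + z.im • J ∈ U := by rwa [Set.mem_preimage, phiCLM_apply] at hz
    exact hsym z.re z.im J hJ h0 K hK
  have hmemV' : ∀ z : ℂ, (z.re : ℍ) + z.im • J ∈ U → z ∈ V := by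
    intro z hz; rwa [Set.mem_preimage, phiCLM_apply]
  have hVo : IsOpen V := hUo.preimage (phiCLM J).continuous
  have hVconj : ∀ z ∈ V, (starRingEnd ℂ) z ∈ V := by
    intro z hz
    apply hmemV'
    simp only [Complex.conj_re, Complex.conj_im, neg_smul, ← smul_neg]
    exact hmemV z hz (-J) (neg_mem_sph hJ)
  have hVconn : IsPreconnected V := by
    set ψ : ℍ → ℂ := fun q => (q.re : ℂ) + ((-(J * q)).re : ℂ) * Complex.I with hψ
    have hψcont : Continuous ψ := by
      apply Continuous.add
      · exact Complex.continuous_ofReal.comp Quaternion.continuous_re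
      · exact ((Complex.continuous_ofReal.comp
          (Quaternion.continuous_re.comp ((continuous_const.mul continuous_id).neg))).mul
          continuous_const)
    have hcomp1 : ∀ a b : ℝ, ((a : ℍ) + b • J).re = a := by
      intro a b
      simp [sph_re hJ]
    have hcomp2 : ∀ a b : ℝ, (-(J * ((a : ℍ) + b • J))).re = b := by
      intro a b
      simp [Quaternion.re_mul, sph_re hJ]
      linear_combination b * sph_sum hJ
    have himg : V = ψ '' (U ∩ CPlane J) := by
      ext z
      constructor
      · intro hz
        refine ⟨(z.re : ℍ) + z.im • J, ⟨hmemV z hz J hJ, ⟨(z.re, z.im), rfl⟩⟩, ?_⟩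
        apply Complex.ext
        · simp [hψ, hcomp1]
        · simp [hψ]
          linear_combination z.im * sph_sum hJ - (z.re + z.im * J.re) * sph_re hJ
      · rintro ⟨q, ⟨hqU, ⟨p, rfl⟩⟩, rfl⟩
        apply hmemV'
        have h1 : (ψ (toSlice J p)).re = p.1 := by
          simp [hψ, toSlice, hcomp1 p.1 p.2]
        have h2 : (ψ (toSlice J p)).im = p.2 := by
          simp [hψ, toSlice]
          linear_combination p.2 * sph_sum hJ - (p.1 + p.2 * J.re) * sph_re hJ
        rw [h1, h2]
        exact hqU
    rw [himg]
    exact ((hUslice J hJ).isPreconnected).image ψ hψcont.continuousOn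
  have hxyV : (⟨x, y⟩ : ℂ) ∈ V := hmemV' ⟨x, y⟩ hp
  obtain ⟨t, ht⟩ : ∃ t : ℝ, (t : ℂ) ∈ V := by
    by_contra hno
    push_neg at hno
    have hnreal : ∀ z ∈ V, z.im ≠ 0 := by
      intro z hz h0
      exact hno z.re (by rwa [show ((z.re : ℝ) : ℂ) = z from Complex.ext rfl (by simp [h0])])
    have hAo : IsOpen {z : ℂ | 0 < z.im} := isOpen_lt continuous_const Complex.continuous_im
    have hBo : IsOpen {z : ℂ | z.im < 0} := isOpen_lt Complex.continuous_im continuous_const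
    have hcov : V ⊆ {z : ℂ | 0 < z.im} ∪ {z : ℂ | z.im < 0} := by
      intro z hz
      rcases lt_trichotomy 0 z.im with h | h | h
      · exact Or.inl h
      · exact absurd h.symm (hnreal z hz)
      · exact Or.inr h
    have hA : (V ∩ {z : ℂ | 0 < z.im}).Nonempty := by
      rcases (hnreal _ hxyV).lt_or_gt with h | h
      · exact ⟨(starRingEnd ℂ) ⟨x, y⟩, hVconj _ hxyV, by simpa using h⟩
      · exact ⟨⟨x, y⟩, hxyV, h⟩
    have hB : (V ∩ {z : ℂ | z.im < 0}).Nonempty := by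
      rcases (hnreal _ hxyV).lt_or_gt with h | h
      · exact ⟨⟨x, y⟩, hxyV, h⟩
      · exact ⟨(starRingEnd ℂ) ⟨x, y⟩, hVconj _ hxyV, by simpa using h⟩
    obtain ⟨z, hzV, hz1, hz2⟩ := hVconn _ _ hAo hBo hcov hA hB
    simp only [Set.mem_setOf_eq] at hz1 hz2
    linarith
  have hCR : ∀ K, K ∈ Sph → ∀ z : ℂ, z ∈ V →
      fderiv ℝ f (phiCLM K z) K = K * fderiv ℝ f (phiCLM K z) 1 := by
    intro K hK z hz
    have hqU : phiCLM K z ∈ U := by rw [phiCLM_apply]; exact hmemV z hz K hK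
    have hqC : phiCLM K z ∈ CPlane K := ⟨(z.re, z.im), (phiCLM_apply K z).symm⟩
    have h0 := hfCR K hK _ ⟨hqU, hqC⟩
    have h1 := congrArg (fun w => K * w) h0
    simp only [mul_add, mul_zero, ← mul_assoc, sph_mul_self hK, neg_one_mul] at h1
    rw [← sub_eq_add_neg] at h1
    exact (sub_eq_zero.mp h1).symm
  set Φ : ℂ →L[ℝ] ℍ := (phiCLM J).comp Complex.conjCLE.toContinuousLinearMap with hΦdef
  have hΦ : ∀ w : ℂ, Φ w = phiCLM J ((starRingEnd ℂ) w) := by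
    intro w; simp [hΦdef]
  have hΦ1 : Φ (1 : ℂ) = 1 := by rw [hΦ, map_one, phiCLM_one]
  have hΦI : Φ Complex.I = -J := by rw [hΦ, Complex.conj_I, map_neg, phiCLM_I]
  set u : ℂ → ℍ := fun z => f (phiCLM I z) with hu_def
  set v : ℂ → ℍ := fun z => (2 : ℝ)⁻¹ • ((1 - I * J) * f (phiCLM J z))
      + (2 : ℝ)⁻¹ • ((1 + I * J) * f (Φ z)) with hv_def
  have hu_prop : ∀ z ∈ V, DifferentiableAt ℝ u z ∧
      fderiv ℝ u z Complex.I = I * fderiv ℝ u z 1 := by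
    intro z hz
    have hqU : phiCLM I z ∈ U := by rw [phiCLM_apply]; exact hmemV z hz I hI
    have hd : HasFDerivAt u ((fderiv ℝ f (phiCLM I z)).comp (phiCLM I)) z :=
      ((hfd _ hqU).hasFDerivAt).comp z (phiCLM I).hasFDerivAt
    refine ⟨hd.differentiableAt, ?_⟩
    rw [hd.fderiv]
    simp only [ContinuousLinearMap.coe_comp', Function.comp_apply, phiCLM_I, phiCLM_one]
    exact hCR I hI z hz
  have hv_prop : ∀ z ∈ V, DifferentiableAt ℝ v z ∧
      fderiv ℝ v z Complex.I = I * fderiv ℝ v z 1 := by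
    intro z hz
    have hz' : (starRingEnd ℂ) z ∈ V := hVconj z hz
    have hq1 : phiCLM J z ∈ U := by rw [phiCLM_apply]; exact hmemV z hz J hJ
    have hq2 : phiCLM J ((starRingEnd ℂ) z) ∈ U := by
      rw [phiCLM_apply]; exact hmemV _ hz' J hJ
    have hd1 : HasFDerivAt (fun w => f (phiCLM J w))
        ((fderiv ℝ f (phiCLM J z)).comp (phiCLM J)) z :=
      ((hfd _ hq1).hasFDerivAt).comp z (phiCLM J).hasFDerivAt
    have hd2 : HasFDerivAt (fun w => f (Φ w))
        ((fderiv ℝ f (phiCLM J ((starRingEnd ℂ) z))).comp Φ) z := by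
      have hB : HasFDerivAt f (fderiv ℝ f (phiCLM J ((starRingEnd ℂ) z))) (Φ z) := by
        rw [hΦ]; exact (hfd _ hq2).hasFDerivAt
      exact hB.comp z Φ.hasFDerivAt
    set A := fderiv ℝ f (phiCLM J z) with hA
    set B := fderiv ℝ f (phiCLM J ((starRingEnd ℂ) z)) with hB
    have hdv : HasFDerivAt v
        ((2 : ℝ)⁻¹ • ((1 - I * J) • (A.comp (phiCLM J))) +
          (2 : ℝ)⁻¹ • ((1 + I * J) • (B.comp Φ))) z :=
      ((hd1.const_mul (1 - I * J)).const_smul ((2 : ℝ)⁻¹)).add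
        ((hd2.const_mul (1 + I * J)).const_smul ((2 : ℝ)⁻¹))
    refine ⟨hdv.differentiableAt, ?_⟩
    rw [hdv.fderiv]
    have hAJ : A J = J * A 1 := hCR J hJ z hz
    have hBJ : B J = J * B 1 := hCR J hJ _ hz'
    have k1 : (1 - I * J) * J = I * (1 - I * J) := by
      have e1 : (1 - I * J) * J = J + I := by
        rw [sub_mul, one_mul, mul_assoc, hJJ, mul_neg_one, sub_neg_eq_add]
      have e2 : I * (1 - I * J) = I + J := by
        rw [mul_sub, mul_one, ← mul_assoc, hII, neg_one_mul, sub_neg_eq_add]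
      rw [e1, e2, add_comm]
    have k2 : (1 + I * J) * -J = I * (1 + I * J) := by
      have e1 : (1 + I * J) * -J = -J + I := by
        rw [mul_neg, add_mul, one_mul, mul_assoc, hJJ, mul_neg_one, neg_add, neg_neg]
      have e2 : I * (1 + I * J) = I + -J := by
        rw [mul_add, mul_one, ← mul_assoc, hII, neg_one_mul]
      rw [e1, e2, add_comm]
    simp only [ContinuousLinearMap.add_apply, ContinuousLinearMap.smul_apply,
      ContinuousLinearMap.coe_comp', Function.comp_apply, phiCLM_I, phiCLM_one, hΦ1, hΦI,
      map_neg, smul_eq_mul]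
    rw [hAJ, hBJ]
    calc (2 : ℝ)⁻¹ • ((1 - I * J) * (J * A 1)) + (2 : ℝ)⁻¹ • ((1 + I * J) * -(J * B 1))
        = (2 : ℝ)⁻¹ • (((1 - I * J) * J) * A 1)
            + (2 : ℝ)⁻¹ • (((1 + I * J) * -J) * B 1) := by
          rw [mul_assoc (1 - I * J) J (A 1), mul_assoc (1 + I * J) (-J) (B 1), neg_mul]
      _ = (2 : ℝ)⁻¹ • (I * ((1 - I * J) * A 1)) + (2 : ℝ)⁻¹ • (I * ((1 + I * J) * B 1)) := by
          rw [k1, k2, mul_assoc, mul_assoc]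
      _ = I * ((2 : ℝ)⁻¹ • ((1 - I * J) * A 1) + (2 : ℝ)⁻¹ • ((1 + I * J) * B 1)) := by
          rw [mul_add, mul_smul_comm, mul_smul_comm]
  have hreal : ∀ z : ℂ, z ∈ V → z.im = 0 → u z = v z := by
    intro z hz h0
    have hconj : (starRingEnd ℂ) z = z := Complex.conj_eq_iff_im.mpr h0
    have hzI : phiCLM I z = ((z.re : ℝ) : ℍ) := by rw [phiCLM_apply, h0]; simp
    have hzJ : phiCLM J z = ((z.re : ℝ) : ℍ) := by rw [phiCLM_apply, h0]; simp
    have hzΦ : Φ z = ((z.re : ℝ) : ℍ) := by rw [hΦ, hconj, hzJ]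
    show f (phiCLM I z) = (2 : ℝ)⁻¹ • ((1 - I * J) * f (phiCLM J z))
        + (2 : ℝ)⁻¹ • ((1 + I * J) * f (Φ z))
    rw [hzI, hzJ, hzΦ, ← smul_add, ← add_mul, sub_add_add_cancel, one_add_one_eq_two]
    rw [show ((2 : ℍ)) * f ((z.re : ℝ) : ℍ) = f ((z.re : ℝ) : ℍ) + f ((z.re : ℝ) : ℍ) from
      two_mul _]
    rw [← two_smul ℝ (f ((z.re : ℝ) : ℍ)), smul_smul]
    norm_num
  have hfreq : ∃ᶠ z in nhdsWithin ((t : ℝ) : ℂ) {((t : ℝ) : ℂ)}ᶜ, u z = v z := by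
    rw [Filter.frequently_iff]
    intro s hs
    rw [mem_nhdsWithin] at hs
    obtain ⟨o, ho, hto, hos⟩ := hs
    obtain ⟨δ, hδ, hballo⟩ := Metric.isOpen_iff.mp ho _ hto
    obtain ⟨ε, hε, hballV⟩ := Metric.isOpen_iff.mp hVo _ ht
    set r := min δ ε / 2 with hr_def
    have hr : 0 < r := by positivity
    have hrδ : r < δ := by
      have h1 := min_le_left δ ε
      rw [hr_def]; linarith
    have hrε : r < ε := by
      have h1 := min_le_right δ ε
      rw [hr_def]; linarith
    have hdist : dist ((t : ℂ) + (r : ℂ)) ((t : ℝ) : ℂ) = r := by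
      rw [dist_eq_norm]
      simp [abs_of_pos hr]
    have hmemo : (t : ℂ) + (r : ℂ) ∈ o := hballo (by rw [Metric.mem_ball, hdist]; exact hrδ)
    have hne : (t : ℂ) + (r : ℂ) ≠ ((t : ℝ) : ℂ) := by
      intro h
      rw [add_eq_left, Complex.ofReal_eq_zero] at h
      exact hr.ne' h
    refine ⟨(t : ℂ) + (r : ℂ), hos ⟨hmemo, by simpa using hne⟩, ?_⟩
    apply hreal
    · exact hballV (by rw [Metric.mem_ball, hdist]; exact hrε)
    · simp
  have heq := slice_identity hI hVo hVconn hu_prop hv_prop ht hfreq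
  have h2 := heq hxyV
  have hPI : phiCLM I ⟨x, y⟩ = (x : ℍ) + y • I := by rw [phiCLM_apply]
  have hPJ : phiCLM J ⟨x, y⟩ = (x : ℍ) + y • J := by rw [phiCLM_apply]
  have hPΦ : Φ (⟨x, y⟩ : ℂ) = (x : ℍ) - y • J := by
    rw [hΦ, phiCLM_apply]
    simp only [Complex.conj_re, Complex.conj_im, neg_smul, sub_eq_add_neg]
  rw [show u (⟨x, y⟩ : ℂ) = f (phiCLM I ⟨x, y⟩) from rfl,
    show v (⟨x, y⟩ : ℂ) = (2 : ℝ)⁻¹ • ((1 - I * J) * f (phiCLM J ⟨x, y⟩))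
        + (2 : ℝ)⁻¹ • ((1 + I * J) * f (Φ (⟨x, y⟩ : ℂ))) from rfl, hPI, hPJ, hPΦ] at h2
  refine ⟨?_, h2⟩
  rw [h2, mul_smul_comm, ← smul_add, ← smul_add]
  congr 1
  simp only [sub_mul, add_mul, one_mul, mul_sub, ← mul_assoc]
  abel


end
end

section
/- Let f be slice regular on an open set U′ ⊆ ℍ and g be slice regular on an open set U ⊆ ℍ with g(U) ⊆ U′, and assume g is quaternionic intrinsic, i.e., g(U ∩ ℂ_I) ⊆ ℂ_I for every I ∈ 𝕊. Then the composition q ↦ f(g(q)) is slice regular on U. -/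
open MeasureTheory Filter Set
open scoped ENNReal

noncomputable section

set_option maxHeartbeats 1000000 in
/-- The composition `f ∘ g` of slice regular functions is slice regular
whenever `g` is quaternionic intrinsic. -/
theorem comp_slice_regular (U' U : Set ℍ) (hU' : IsOpen U') (hU : IsOpen U)
    (f g : ℍ → ℍ) (hf : SliceRegularOn f U') (hg : SliceRegularOn g U)
    (hrange : g '' U ⊆ U')
    (hintr : ∀ I ∈ Sph, g '' (U ∩ CPlane I) ⊆ CPlane I) :
    SliceRegularOn (fun q => f (g q)) U := by
  have hsmul1 : ∀ x : ℝ, x • (1:ℍ) = (x:ℍ) := fun x => by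
    rw [← Quaternion.coe_mul_eq_smul, mul_one]
  have hdiff : ∀ q ∈ U, DifferentiableAt ℝ (fun q => f (g q)) q := by
    intro q hq
    exact (hf.1 (g q) (hrange ⟨q, hq, rfl⟩)).comp q (hg.1 q hq)
  refine ⟨hdiff, ?_⟩
  intro I hI q hq
  have hqU : q ∈ U := hq.1
  have hgq' : g q ∈ U' := hrange ⟨q, hqU, rfl⟩
  have hgqC : g q ∈ CPlane I := hintr I hI ⟨q, hq, rfl⟩
  set A := fderiv ℝ g q with hA
  set B := fderiv ℝ f (g q) with hB
  have hII : I * I = -1 := by rw [← sq]; exact hI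
  have hfd : fderiv ℝ (fun q => f (g q)) q = B.comp A :=
    fderiv_comp q (hf.1 (g q) hgq') (hg.1 q hqU)
  have hgA : A 1 + I * A I = 0 := hg.2 I hI q hq
  have hfB : B 1 + I * B I = 0 := hf.2 I hI (g q) ⟨hgq', hgqC⟩
  have hAI : A I = I * A 1 := by
    have h1 : I * (A 1) + I * (I * A I) = 0 := by rw [← mul_add, hgA, mul_zero]
    have h2 : I * (I * A I) = - A I := by rw [← mul_assoc, hII, neg_one_mul]
    rw [h2, add_neg_eq_zero] at h1
    exact h1.symm
  have hBI : B I = I * B 1 := by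
    have h1 : I * (B 1) + I * (I * B I) = 0 := by rw [← mul_add, hfB, mul_zero]
    have h2 : I * (I * B I) = - B I := by rw [← mul_assoc, hII, neg_one_mul]
    rw [h2, add_neg_eq_zero] at h1
    exact h1.symm
  set V : Submodule ℝ ℍ := Submodule.span ℝ {1, I} with hV
  have hVclosed : IsClosed (V : Set ℍ) := V.closed_of_finiteDimensional
  have hCV : CPlane I ⊆ (V : Set ℍ) := by
    rintro _ ⟨z, rfl⟩
    have he : toSlice I z = z.1 • (1:ℍ) + z.2 • I := by rw [toSlice, hsmul1]
    rw [he]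
    exact Submodule.add_mem V
      (Submodule.smul_mem V _ (Submodule.subset_span (by simp)))
      (Submodule.smul_mem V _ (Submodule.subset_span (by simp)))
  obtain ⟨z₀, hz₀⟩ := hq.2
  have hcurve : HasDerivAt (fun t : ℝ => g (q + t • (1:ℍ))) (A 1) 0 := by
    have hline : HasDerivAt (fun t : ℝ => q + t • (1:ℍ)) (1:ℍ) 0 := by
      simpa using ((hasDerivAt_id (0:ℝ)).smul_const (1:ℍ)).const_add q
    have hg' : HasFDerivAt g A (q + (0:ℝ) • (1:ℍ)) := by
      simpa using (hg.1 q hqU).hasFDerivAt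
    exact hg'.comp_hasDerivAt 0 hline
  have hmemA : A 1 ∈ V := by
    have htend := hasDerivAt_iff_tendsto_slope.mp hcurve
    refine hVclosed.mem_of_tendsto htend ?_
    have hev : ∀ᶠ t : ℝ in nhds 0, q + t • (1:ℍ) ∈ U := by
      have hc : Continuous fun t : ℝ => q + t • (1:ℍ) :=
        continuous_const.add (continuous_id.smul continuous_const)
      have h0 : (fun t : ℝ => q + t • (1:ℍ)) 0 ∈ U := by simpa using hqU
      exact hc.continuousAt.eventually_mem (hU.mem_nhds h0)
    filter_upwards [self_mem_nhdsWithin, eventually_nhdsWithin_of_eventually_nhds hev]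
      with t ht htU
    have hplane : q + t • (1:ℍ) ∈ CPlane I := by
      refine ⟨(z₀.1 + t, z₀.2), ?_⟩
      show ((z₀.1 + t : ℝ) : ℍ) + z₀.2 • I = q + t • (1:ℍ)
      rw [← hz₀, toSlice, hsmul1, Quaternion.coe_add]
      abel
    have h1 : g (q + t • (1:ℍ)) ∈ V := hCV (hintr I hI ⟨_, ⟨htU, hplane⟩, rfl⟩)
    have h2 : g q ∈ V := hCV hgqC
    have hs : slope (fun t : ℝ => g (q + t • (1:ℍ))) 0 t
        = t⁻¹ • (g (q + t • (1:ℍ)) - g q) := by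
      simp [slope, vsub_eq_sub]
    rw [hs]
    exact Submodule.smul_mem V _ (Submodule.sub_mem V h1 h2)
  obtain ⟨x, y, hxy⟩ := Submodule.mem_span_pair.mp hmemA
  rw [hfd]
  show B (A 1) + I * B (A I) = 0
  rw [hAI, ← hxy]
  have e1 : I * (x • (1:ℍ) + y • I) = x • I - y • (1:ℍ) := by
    rw [mul_add, mul_smul_comm, mul_smul_comm, mul_one, hII]
    simp [sub_eq_add_neg]
  rw [e1, map_add, map_sub, _root_.map_smul, _root_.map_smul, _root_.map_smul, _root_.map_smul, hBI,
    mul_sub, mul_smul_comm, mul_smul_comm, ← mul_assoc, hII, neg_one_mul]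
  simp only [smul_neg]
  abel

end
end

section
/- There exists a constant C₁ > 0 such that for every α ∈ 𝔹, every r ∈ (0,1) and every q in the pseudohyperbolic ball B(α,r), one has ((1 − r)/C₁)·(1 − |α|) ≤ 1 − |q| ≤ (C₁/(1 − r))·(1 − |α|); that is, the Euclidean distances of q and of α to ∂𝔹 are comparable with constants (1 − r)/C₁ and C₁/(1 − r). -/
open MeasureTheory Filter Set
open scoped ENNReal

noncomputable section

open scoped RealInnerProductSpace

set_option maxHeartbeats 1600000 in
lemma pRho_key (q α : ℍ) (hq : ‖q‖ < 1) (ha : ‖α‖ < 1) {r : ℝ} (hr0 : 0 < r)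
    (h : pRho q α < r) : |‖q‖ - ‖α‖| < r * (1 - ‖q‖ * ‖α‖) := by
  set s := ‖q‖ with hs_def
  set a := ‖α‖ with ha_def
  have hs0 : 0 ≤ s := norm_nonneg q
  have ha0 : 0 ≤ a := norm_nonneg α
  have hsa : s * a < 1 := by nlinarith
  have hu_ne : (1 : ℍ) - q * α ≠ 0 := by
    intro h0
    have h1 : q * α = 1 := by
      have := sub_eq_zero.mp h0; exact this.symm
    have h2 : ‖q * α‖ = s * a := norm_mul q α
    rw [h1, norm_one] at h2
    nlinarith
  set u : ℍ := 1 - q * α with hu_def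
  set p : ℍ := u⁻¹ * q * u with hp_def
  have hup : u * p = q * u := by
    rw [hp_def, ← mul_assoc, ← mul_assoc, mul_inv_cancel₀ hu_ne, one_mul]
  have hps : ‖p‖ = s := by
    have hnu : ‖u‖ ≠ 0 := norm_ne_zero_iff.mpr hu_ne
    rw [hp_def, norm_mul, norm_mul, norm_inv]
    field_simp
    exact hs_def.symm
  have hnum : -α + q * (1 + α ^ 2) - q ^ 2 * α = u * (p - α) := by
    have h1 : u * (p - α) = u * p - u * α := mul_sub u p α
    rw [h1, hup, hu_def]
    noncomm_ring
  have hden : (1 : ℍ) - (2 * α.re) • q + (‖α‖ ^ 2) • q ^ 2 = u * (1 - p * star α) := by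
    have h1 : u * (1 - p * star α) = u - (u * p) * star α := by noncomm_ring
    rw [h1, hup, hu_def]
    have h2 : (2 * α.re) • q = q * (α + star α) := by
      rw [Quaternion.self_add_star', ← Quaternion.coe_mul_eq_smul, Quaternion.coe_commutes]
    have h3 : (‖α‖ ^ 2) • (q ^ 2) = q ^ 2 * (α * star α) := by
      rw [Quaternion.self_mul_star, ← Quaternion.coe_commutes, Quaternion.coe_mul_eq_smul]
      congr 1
      rw [sq, Quaternion.normSq_eq_norm_mul_self]
    rw [h2, h3]
    noncomm_ring
  have hu_norm : 1 - s * a ≤ ‖u‖ := by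
    have := norm_sub_norm_le (1 : ℍ) (q * α)
    rw [norm_one, norm_mul] at this
    exact this
  have hv_norm : 1 - s * a ≤ ‖(1 : ℍ) - p * star α‖ := by
    have := norm_sub_norm_le (1 : ℍ) (p * star α)
    rw [norm_one, norm_mul, Quaternion.norm_star, hps] at this
    exact this
  have hsa0 : (0 : ℝ) < 1 - s * a := by linarith
  have hu_pos : 0 < ‖u‖ := lt_of_lt_of_le hsa0 hu_norm
  have hv_pos : 0 < ‖(1 : ℍ) - p * star α‖ := lt_of_lt_of_le hsa0 hv_norm
  have hrho : pRho q α = ‖p - α‖ / ‖(1 : ℍ) - p * star α‖ := by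
    rw [pRho, hnum, hden, norm_mul, norm_inv, norm_mul, norm_mul]
    field_simp
  rw [hrho, div_lt_iff₀ hv_pos] at h
  set w : ℝ := ⟪p, α⟫ with hw_def
  have h1 : ‖p - α‖ ^ 2 = s ^ 2 - 2 * w + a ^ 2 := by
    rw [norm_sub_sq_real, hps]
  have hw1 : ⟪(1 : ℍ), p * star α⟫ = w := by
    rw [hw_def, Quaternion.inner_def, Quaternion.inner_def, one_mul, Quaternion.re_star]
  have h2 : ‖(1 : ℍ) - p * star α‖ ^ 2 = 1 - 2 * w + (s * a) ^ 2 := by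
    rw [norm_sub_sq_real, hw1, norm_one, norm_mul, Quaternion.norm_star, hps]
    ring
  have h3 : |w| ≤ s * a := by
    have := abs_real_inner_le_norm p α
    rw [hps] at this
    exact this
  obtain ⟨h3a, h3b⟩ := abs_le.mp h3
  have hsq : s ^ 2 - 2 * w + a ^ 2 < r ^ 2 * (1 - 2 * w + (s * a) ^ 2) := by
    have := pow_lt_pow_left₀ h (norm_nonneg (p - α)) (n := 2) (by norm_num)
    rw [h1, mul_pow, h2] at this
    linarith
  have hD : 0 < 1 - 2 * w + (s * a) ^ 2 := by nlinarith
  have e : (s ^ 2 - 2 * w + a ^ 2) * (1 - s * a) ^ 2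
      - (s - a) ^ 2 * (1 - 2 * w + (s * a) ^ 2) = 2 * (s * a - w) * (1 - s ^ 2) * (1 - a ^ 2) := by
    ring
  have hB : (0:ℝ) ≤ 1 - s ^ 2 := by nlinarith
  have hC : (0:ℝ) ≤ 1 - a ^ 2 := by nlinarith
  have hnn : 0 ≤ 2 * (s * a - w) * (1 - s ^ 2) * (1 - a ^ 2) := by
    have := mul_nonneg (mul_nonneg (by linarith : (0:ℝ) ≤ 2 * (s * a - w)) hB) hC
    linarith
  have hmain : (s - a) ^ 2 * (1 - 2 * w + (s * a) ^ 2)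
      ≤ (s ^ 2 - 2 * w + a ^ 2) * (1 - s * a) ^ 2 := by linarith
  have hfin : (s - a) ^ 2 < r ^ 2 * (1 - s * a) ^ 2 := by
    have hc : (s ^ 2 - 2 * w + a ^ 2) * (1 - s * a) ^ 2
        < r ^ 2 * (1 - 2 * w + (s * a) ^ 2) * (1 - s * a) ^ 2 :=
      mul_lt_mul_of_pos_right hsq (by positivity)
    have := lt_of_le_of_lt hmain hc
    have h4 : (s - a) ^ 2 * (1 - 2 * w + (s * a) ^ 2)
        < (r ^ 2 * (1 - s * a) ^ 2) * (1 - 2 * w + (s * a) ^ 2) := by nlinarith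
    exact lt_of_mul_lt_mul_right h4 (le_of_lt hD)
  have hrpos : 0 < r * (1 - s * a) := by positivity
  rw [abs_lt]
  constructor
  · nlinarith [sq_nonneg (s - a + r * (1 - s * a))]
  · nlinarith [sq_nonneg (s - a - r * (1 - s * a))]

/-- There is a constant `C₁` such that for every `α ∈ 𝔹`, `r ∈ (0,1)` and `q ∈ B(α,r)`,
`((1−r)/C₁)(1−|α|) ≤ 1−|q| ≤ (C₁/(1−r))(1−|α|)`. -/
theorem pBall_dist_boundary_comparable :
    ∃ C₁ : ℝ, 0 < C₁ ∧ ∀ α ∈ B1, ∀ r ∈ Set.Ioo (0 : ℝ) 1, ∀ q ∈ pBall α r,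
      ((1 - r) / C₁) * (1 - ‖α‖) ≤ 1 - ‖q‖ ∧ 1 - ‖q‖ ≤ (C₁ / (1 - r)) * (1 - ‖α‖) := by
  refine ⟨2, by norm_num, fun α hα r hr q hq => ?_⟩
  have ha : ‖α‖ < 1 := by simpa [B1, mem_ball_zero_iff] using hα
  have hq1 : ‖q‖ < 1 := by simpa [B1, mem_ball_zero_iff] using hq.1
  obtain ⟨hr0, hr1⟩ := hr
  have hkey := pRho_key q α hq1 ha hr0 hq.2
  set s := ‖q‖
  set a := ‖α‖
  have hs0 : 0 ≤ s := norm_nonneg q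
  have ha0 : 0 ≤ a := norm_nonneg α
  obtain ⟨hk1, hk2⟩ := abs_lt.mp hkey
  constructor
  · -- (1-r)/2 * (1-a) ≤ 1-s
    have h1 : (1 - r) * (1 - a) ≤ 2 * (1 - s) := by
      nlinarith [mul_nonneg (sub_nonneg.mpr ha.le) (sub_nonneg.mpr hq1.le),
        mul_nonneg hr0.le (mul_nonneg (sub_nonneg.mpr ha.le) (sub_nonneg.mpr hq1.le))]
    linarith
  · -- 1-s ≤ 2/(1-r) * (1-a)
    rw [div_mul_eq_mul_div, le_div_iff₀ (by linarith : (0:ℝ) < 1 - r)]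
    nlinarith [mul_nonneg (sub_nonneg.mpr ha.le) (sub_nonneg.mpr hq1.le),
      mul_nonneg hr0.le (mul_nonneg (sub_nonneg.mpr ha.le) (sub_nonneg.mpr hq1.le))]


end
end

section
/- For every r ∈ (0,1) there exists a constant C₅(r) such that for every α ∈ 𝔹 the set Δ(α,r) can be covered by at most C₅(r)·d⁻⁴ pseudohyperbolic balls B(α_j, 4r) whose centers α_j all belong to the sphere [α] = {Re(α) + J|Im(α)| : J ∈ 𝕊} of points with the same real part and the same modulus as α, where d = (1 − |α|²)^{1/2}. -/
open MeasureTheory Filter Set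
open scoped ENNReal

noncomputable section

namespace CoveringAux

lemma norm_sq_q (a : ℍ) : ‖a‖ ^ 2 = Quaternion.normSq a := by
  rw [sq, ← Quaternion.normSq_eq_norm_mul_self]

lemma sph_re_im {J : ℍ} (hJ : J ∈ Sph) :
    J.re = 0 ∧ J.imI ^ 2 + J.imJ ^ 2 + J.imK ^ 2 = 1 := by
  have h : J ^ 2 = -1 := hJ
  rw [sq, Quaternion.ext_iff] at h
  simp only [Quaternion.re_mul, Quaternion.imI_mul, Quaternion.imJ_mul, Quaternion.imK_mul,
    Quaternion.re_neg, Quaternion.re_one, Quaternion.imI_neg, Quaternion.imI_one,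
    Quaternion.imJ_neg, Quaternion.imJ_one, Quaternion.imK_neg, Quaternion.imK_one] at h
  obtain ⟨h1, h2, h3, h4⟩ := h
  have hre : J.re = 0 := by
    by_contra hre
    have hi : J.imI = 0 := by
      have : (2 * J.re) * J.imI = 0 := by linarith
      rcases mul_eq_zero.1 this with h | h
      · exact absurd (by linarith : J.re = 0) hre
      · exact h
    have hj : J.imJ = 0 := by
      have : (2 * J.re) * J.imJ = 0 := by linarith
      rcases mul_eq_zero.1 this with h | h
      · exact absurd (by linarith : J.re = 0) hre
      · exact h
    have hk : J.imK = 0 := by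
      have : (2 * J.re) * J.imK = 0 := by linarith
      rcases mul_eq_zero.1 this with h | h
      · exact absurd (by linarith : J.re = 0) hre
      · exact h
    nlinarith [sq_nonneg J.re]
  exact ⟨hre, by nlinarith⟩

lemma mulJJ (J : ℍ) (hJ : J ∈ Sph) : J * J = -1 := by
  have h : J ^ 2 = -1 := hJ; rwa [sq] at h

lemma mkS_re (J : ℍ) (hJ : J ∈ Sph) (a b : ℝ) : ((a : ℍ) + b • J).re = a := by
  obtain ⟨h0, _⟩ := sph_re_im hJ
  simp [h0]

lemma mkS_normSq (J : ℍ) (hJ : J ∈ Sph) (a b : ℝ) :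
    Quaternion.normSq ((a : ℍ) + b • J) = a ^ 2 + b ^ 2 := by
  obtain ⟨h0, h1⟩ := sph_re_im hJ
  simp only [Quaternion.normSq_def', Quaternion.re_add, Quaternion.imI_add, Quaternion.imJ_add,
    Quaternion.imK_add, Quaternion.re_coe, Quaternion.imI_coe, Quaternion.imJ_coe,
    Quaternion.imK_coe, Quaternion.re_smul, Quaternion.imI_smul, Quaternion.imJ_smul,
    Quaternion.imK_smul, smul_eq_mul, h0]
  linear_combination b ^ 2 * h1

lemma mkS_norm_sq (J : ℍ) (hJ : J ∈ Sph) (a b : ℝ) :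
    ‖(a : ℍ) + b • J‖ ^ 2 = a ^ 2 + b ^ 2 := by
  rw [norm_sq_q, mkS_normSq J hJ]

lemma sq_mkS (J : ℍ) (hJ : J ∈ Sph) (a b : ℝ) :
    ((a : ℍ) + b • J) ^ 2 = ((a ^ 2 - b ^ 2 : ℝ) : ℍ) + (2 * a * b) • J := by
  obtain ⟨h0, h1⟩ := sph_re_im hJ
  rw [sq]
  ext <;>
    simp only [Quaternion.re_mul, Quaternion.imI_mul, Quaternion.imJ_mul, Quaternion.imK_mul,
      Quaternion.re_add, Quaternion.imI_add, Quaternion.imJ_add, Quaternion.imK_add,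
      Quaternion.re_coe, Quaternion.imI_coe, Quaternion.imJ_coe, Quaternion.imK_coe,
      Quaternion.re_smul, Quaternion.imI_smul, Quaternion.imJ_smul, Quaternion.imK_smul,
      smul_eq_mul, h0]
  · linear_combination (-(b ^ 2)) * h1
  · ring
  · ring
  · ring

lemma NN_form (J K : ℍ) (hJ : J ∈ Sph) (hK : K ∈ Sph) (u v x y : ℝ) :
    -(((x : ℝ) : ℍ) + y • K) + ((u : ℍ) + v • J) * (1 + ((x : ℍ) + y • K) ^ 2)
        - ((u : ℍ) + v • J) ^ 2 * ((x : ℍ) + y • K)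
      = ((-x + u * (1 + x ^ 2 - y ^ 2) - (u ^ 2 - v ^ 2) * x : ℝ) : ℍ)
        + (v * (1 + x ^ 2 - y ^ 2) - 2 * u * v * x) • J
        + (-y + 2 * x * y * u - (u ^ 2 - v ^ 2) * y) • K
        + (2 * x * y * v - 2 * u * v * y) • (J * K) := by
  obtain ⟨h0J, _⟩ := sph_re_im hJ
  obtain ⟨h0K, _⟩ := sph_re_im hK
  rw [sq_mkS J hJ, sq_mkS K hK]
  ext <;>
    simp only [Quaternion.re_mul, Quaternion.imI_mul, Quaternion.imJ_mul, Quaternion.imK_mul,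
      Quaternion.re_add, Quaternion.imI_add, Quaternion.imJ_add, Quaternion.imK_add,
      Quaternion.re_sub, Quaternion.imI_sub, Quaternion.imJ_sub, Quaternion.imK_sub,
      Quaternion.re_neg, Quaternion.imI_neg, Quaternion.imJ_neg, Quaternion.imK_neg,
      Quaternion.re_one, Quaternion.imI_one, Quaternion.imJ_one, Quaternion.imK_one,
      Quaternion.re_coe, Quaternion.imI_coe, Quaternion.imJ_coe, Quaternion.imK_coe,
      Quaternion.re_smul, Quaternion.imI_smul, Quaternion.imJ_smul, Quaternion.imK_smul,
      smul_eq_mul, h0J, h0K] <;>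
    ring

lemma normSq_combo (J K : ℍ) (hJ : J ∈ Sph) (hK : K ∈ Sph) (n₀ n₁ n₂ n₃ : ℝ) :
    Quaternion.normSq (((n₀ : ℝ) : ℍ) + n₁ • J + n₂ • K + n₃ • (J * K))
      = n₀ ^ 2 + n₁ ^ 2 + n₂ ^ 2 + n₃ ^ 2 + 2 * (J * K).re * (n₀ * n₃ - n₁ * n₂) := by
  obtain ⟨h0J, h1J⟩ := sph_re_im hJ
  obtain ⟨h0K, h1K⟩ := sph_re_im hK
  simp only [Quaternion.normSq_def', Quaternion.re_mul, Quaternion.imI_mul, Quaternion.imJ_mul,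
    Quaternion.imK_mul, Quaternion.re_add, Quaternion.imI_add, Quaternion.imJ_add,
    Quaternion.imK_add, Quaternion.re_coe, Quaternion.imI_coe, Quaternion.imJ_coe,
    Quaternion.imK_coe, Quaternion.re_smul, Quaternion.imI_smul, Quaternion.imJ_smul,
    Quaternion.imK_smul, smul_eq_mul, h0J, h0K]
  linear_combination (n₁ ^ 2 + n₃ ^ 2 * (K.imI ^ 2 + K.imJ ^ 2 + K.imK ^ 2)) * h1J
    + (n₂ ^ 2 + n₃ ^ 2) * h1K


lemma pRho_sq (q β : ℍ) : pRho q β ^ 2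
    = Quaternion.normSq (-β + q * (1 + β ^ 2) - q ^ 2 * β)
      / Quaternion.normSq (1 - (2 * β.re) • q + (‖β‖ ^ 2) • q ^ 2) := by
  unfold pRho
  rw [norm_mul, norm_inv, mul_pow, inv_pow, inv_mul_eq_div,
    norm_sq_q (-β + q * (1 + β ^ 2) - q ^ 2 * β),
    norm_sq_q (1 - (2 * β.re) • q + (‖β‖ ^ 2) • q ^ 2)]

lemma pRho_nonneg (q β : ℍ) : 0 ≤ pRho q β := norm_nonneg _

lemma pRho_sq_combo (J K : ℍ) (hJ : J ∈ Sph) (hK : K ∈ Sph) (u v x y : ℝ) :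
    pRho ((u : ℍ) + v • J) ((x : ℍ) + y • K) ^ 2
      = ((1 - (J * K).re) / 2) * pRho ((u : ℍ) + v • J) ((x : ℍ) + y • J) ^ 2
        + ((1 + (J * K).re) / 2) * pRho ((u : ℍ) + v • J) ((x : ℍ) + (-y) • J) ^ 2 := by
  have hd : ∀ L : ℍ, L ∈ Sph → ∀ y' : ℝ, y' ^ 2 = y ^ 2 →
      Quaternion.normSq (1 - (2 * ((x : ℍ) + y' • L).re) • ((u : ℍ) + v • J)
        + (‖(x : ℍ) + y' • L‖ ^ 2) • ((u : ℍ) + v • J) ^ 2)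
      = Quaternion.normSq (1 - (2 * x) • ((u : ℍ) + v • J)
        + (x ^ 2 + y ^ 2) • ((u : ℍ) + v • J) ^ 2) := by
    intro L hL y' hy'
    rw [mkS_re L hL, mkS_norm_sq L hL, hy']
  rw [pRho_sq, pRho_sq, pRho_sq, NN_form J K hJ hK, NN_form J J hJ hJ,
    NN_form J J hJ hJ u v x (-y), hd K hK y rfl, hd J hJ y rfl, hd J hJ (-y) (by ring)]
  rw [normSq_combo J K hJ hK, normSq_combo J J hJ hJ, normSq_combo J J hJ hJ]
  have hJJ : (J * J).re = -1 := by rw [mulJJ J hJ]; simp; rfl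
  rw [hJJ, ← mul_div_assoc, ← mul_div_assoc, ← add_div]
  congr 1
  ring

set_option maxHeartbeats 1000000 in
lemma pRho_slice_lt (J : ℍ) (hJ : J ∈ Sph) (u v x y r' : ℝ)
    (hq : u ^ 2 + v ^ 2 < 1) (hw : x ^ 2 + y ^ 2 < 1)
    (h : (u - x) ^ 2 + (v - y) ^ 2
        < r' ^ 2 * ((1 - u * x - v * y) ^ 2 + (u * y - v * x) ^ 2)) :
    pRho ((u : ℍ) + v • J) ((x : ℍ) + y • J) ^ 2 < r' ^ 2 := by
  have hP : (0:ℝ) < (1 - (u * x - v * y)) ^ 2 + (u * y + v * x) ^ 2 := by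
    nlinarith [sq_nonneg (u - x), sq_nonneg (v + y),
      mul_pos (show (0:ℝ) < 1 - (u ^ 2 + v ^ 2) by linarith)
        (show (0:ℝ) < 1 - (x ^ 2 + y ^ 2) by linarith)]
  have hd : (0:ℝ) < (1 - u * x - v * y) ^ 2 + (u * y - v * x) ^ 2 := by
    nlinarith [sq_nonneg (u - x), sq_nonneg (v - y),
      mul_pos (show (0:ℝ) < 1 - (u ^ 2 + v ^ 2) by linarith)
        (show (0:ℝ) < 1 - (x ^ 2 + y ^ 2) by linarith)]
  have hden : (1 : ℍ) - (2 * x) • ((u : ℍ) + v • J) + (x ^ 2 + y ^ 2) • ((u : ℍ) + v • J) ^ 2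
      = ((1 - 2 * x * u + (x ^ 2 + y ^ 2) * (u ^ 2 - v ^ 2) : ℝ) : ℍ)
        + (-(2 * x * v) + 2 * u * v * (x ^ 2 + y ^ 2)) • J := by
    obtain ⟨h0, _⟩ := sph_re_im hJ
    rw [sq_mkS J hJ]
    ext <;>
      simp only [Quaternion.re_sub, Quaternion.imI_sub, Quaternion.imJ_sub, Quaternion.imK_sub,
        Quaternion.re_add, Quaternion.imI_add, Quaternion.imJ_add, Quaternion.imK_add,
        Quaternion.re_one, Quaternion.imI_one, Quaternion.imJ_one, Quaternion.imK_one,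
        Quaternion.re_coe, Quaternion.imI_coe, Quaternion.imJ_coe, Quaternion.imK_coe,
        Quaternion.re_smul, Quaternion.imI_smul, Quaternion.imJ_smul, Quaternion.imK_smul,
        smul_eq_mul, h0] <;>
      ring
  rw [pRho_sq, mkS_re J hJ, mkS_norm_sq J hJ, NN_form J J hJ hJ, normSq_combo J J hJ hJ,
    mulJJ J hJ, hden, mkS_normSq J hJ]
  have hre : (-1 : ℍ).re = -1 := by simp; rfl
  rw [hre]
  have hh := mul_lt_mul_of_pos_left h hP
  refine (div_lt_iff₀ ?_).mpr ?_
  · nlinarith [mul_pos hP hd]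
  · linarith [hh]

lemma reflect_real {r a b x y b' y' : ℝ} (hr0 : 0 ≤ r) (hr1 : r ≤ 1)
    (hb : b' ^ 2 = b ^ 2) (hy : y' ^ 2 = y ^ 2) (hby : b * y ≤ b' * y')
    (h : (a - x) ^ 2 + (b - y) ^ 2
        < r ^ 2 * ((1 - a * x - b * y) ^ 2 + (a * y - b * x) ^ 2)) :
    (a - x) ^ 2 + (b' - y') ^ 2
      < r ^ 2 * ((1 - a * x - b' * y') ^ 2 + (a * y' - b' * x) ^ 2) := by
  have e1 : (a - x) ^ 2 + (b' - y') ^ 2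
      = (a - x) ^ 2 + (b - y) ^ 2 - 2 * (b' * y' - b * y) := by
    linear_combination hb + hy
  have e3 : r ^ 2 * ((1 - a * x - b' * y') ^ 2 + (a * y' - b' * x) ^ 2)
      = r ^ 2 * ((1 - a * x - b * y) ^ 2 + (a * y - b * x) ^ 2)
        - r ^ 2 * (2 * (b' * y' - b * y)) := by
    linear_combination (r ^ 2 * (y' ^ 2 + x ^ 2)) * hb + (r ^ 2 * (b ^ 2 + a ^ 2)) * hy
  have hfac : 0 ≤ (1 - r ^ 2) * (2 * (b' * y' - b * y)) := by
    apply mul_nonneg <;> nlinarith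
  linarith [h, e1, e3, hfac]

lemma mem_sph_of {p : ℍ} (h0 : p.re = 0) (h1 : p.imI ^ 2 + p.imJ ^ 2 + p.imK ^ 2 = 1) :
    p ∈ Sph := by
  show p ^ 2 = -1
  rw [sq]
  ext <;>
    simp only [Quaternion.re_mul, Quaternion.imI_mul, Quaternion.imJ_mul, Quaternion.imK_mul,
      Quaternion.re_neg, Quaternion.imI_neg, Quaternion.imJ_neg, Quaternion.imK_neg,
      Quaternion.re_one, Quaternion.imI_one, Quaternion.imJ_one, Quaternion.imK_one, h0]
  · linear_combination -h1
  · ring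
  · ring
  · ring

lemma one_sub_mul_star (I : ℍ) (hI : I ∈ Sph) (a b c d : ℝ) :
    (1 : ℍ) - ((a : ℍ) + b • I) * star ((c : ℍ) + d • I)
      = ((1 - a * c - b * d : ℝ) : ℍ) + (a * d - b * c) • I := by
  obtain ⟨h0, h1⟩ := sph_re_im hI
  have hsimp : True := trivial
  ext <;>
    simp only [Quaternion.re_sub, Quaternion.imI_sub, Quaternion.imJ_sub, Quaternion.imK_sub,
      Quaternion.re_add, Quaternion.imI_add, Quaternion.imJ_add, Quaternion.imK_add,
      Quaternion.re_mul, Quaternion.imI_mul, Quaternion.imJ_mul, Quaternion.imK_mul,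
      Quaternion.re_star, Quaternion.imI_star, Quaternion.imJ_star, Quaternion.imK_star,
      Quaternion.re_one, Quaternion.imI_one, Quaternion.imJ_one, Quaternion.imK_one,
      Quaternion.re_coe, Quaternion.imI_coe, Quaternion.imJ_coe, Quaternion.imK_coe,
      Quaternion.re_smul, Quaternion.imI_smul, Quaternion.imJ_smul, Quaternion.imK_smul,
      smul_eq_mul, h0]
  · linear_combination (-(b * d)) * h1
  · ring
  · ring
  · ring

lemma mkS_sub (I : ℍ) (a b c d : ℝ) :
    ((a : ℍ) + b • I) - ((c : ℍ) + d • I) = ((a - c : ℝ) : ℍ) + (b - d) • I := by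
  ext <;>
    simp only [Quaternion.re_sub, Quaternion.imI_sub, Quaternion.imJ_sub, Quaternion.imK_sub,
      Quaternion.re_add, Quaternion.imI_add, Quaternion.imJ_add, Quaternion.imK_add,
      Quaternion.re_coe, Quaternion.imI_coe, Quaternion.imJ_coe, Quaternion.imK_coe,
      Quaternion.re_smul, Quaternion.imI_smul, Quaternion.imJ_smul, Quaternion.imK_smul,
      smul_eq_mul] <;>
    ring

lemma im_norm_sq (q : ℍ) : ‖q.im‖ ^ 2 = q.imI ^ 2 + q.imJ ^ 2 + q.imK ^ 2 := by
  rw [norm_sq_q, Quaternion.normSq_def']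
  simp

lemma norm_sq_decomp (q : ℍ) : ‖q‖ ^ 2 = q.re ^ 2 + ‖q.im‖ ^ 2 := by
  rw [norm_sq_q, Quaternion.normSq_def', im_norm_sq]
  ring

lemma mkS_im_norm_sq (J : ℍ) (hJ : J ∈ Sph) (a b : ℝ) :
    ‖((a : ℍ) + b • J).im‖ ^ 2 = b ^ 2 := by
  obtain ⟨h0, h1⟩ := sph_re_im hJ
  rw [im_norm_sq]
  simp only [Quaternion.imI_add, Quaternion.imJ_add, Quaternion.imK_add,
    Quaternion.imI_coe, Quaternion.imJ_coe, Quaternion.imK_coe,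
    Quaternion.imI_smul, Quaternion.imJ_smul, Quaternion.imK_smul, smul_eq_mul]
  linear_combination b ^ 2 * h1

lemma normSq_sub_sph (J K : ℍ) (hJ : J ∈ Sph) (hK : K ∈ Sph) :
    Quaternion.normSq (J - K) = 2 + 2 * (J * K).re := by
  obtain ⟨h0J, h1J⟩ := sph_re_im hJ
  obtain ⟨h0K, h1K⟩ := sph_re_im hK
  simp only [Quaternion.normSq_def', Quaternion.re_sub, Quaternion.imI_sub, Quaternion.imJ_sub,
    Quaternion.imK_sub, Quaternion.re_mul, h0J, h0K]
  linear_combination h1J + h1K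

lemma normSq_add_sph (J K : ℍ) (hJ : J ∈ Sph) (hK : K ∈ Sph) :
    Quaternion.normSq (J + K) = 2 - 2 * (J * K).re := by
  obtain ⟨h0J, h1J⟩ := sph_re_im hJ
  obtain ⟨h0K, h1K⟩ := sph_re_im hK
  simp only [Quaternion.normSq_def', Quaternion.re_add, Quaternion.imI_add, Quaternion.imJ_add,
    Quaternion.imK_add, Quaternion.re_mul, h0J, h0K]
  linear_combination h1J + h1K

lemma unit_im_mem_sph {p : ℍ} (h0 : p.re = 0) (hp : p ≠ 0) : ‖p‖⁻¹ • p ∈ Sph := by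
  have hn : ‖p‖ ≠ 0 := norm_ne_zero_iff.mpr hp
  apply mem_sph_of
  · simp [h0]
  · simp only [Quaternion.imI_smul, Quaternion.imJ_smul, Quaternion.imK_smul, smul_eq_mul]
    have h2 : ‖p‖ ^ 2 = p.imI ^ 2 + p.imJ ^ 2 + p.imK ^ 2 := by
      rw [norm_sq_q, Quaternion.normSq_def', h0]
      ring
    field_simp
    linarith [h2]


lemma sq_lt_self_of_lt_one {x s : ℝ} (hx1 : x < 1) (hx0 : 0 ≤ x) (heq : x ^ 2 = s) :
    s < 1 := by nlinarith

lemma lt_one_of_sq {x s : ℝ} (heq : x ^ 2 = s) (hs : s < 1) (hx0 : 0 ≤ x) : x < 1 := by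
  nlinarith

lemma sq_lt_of_lt_mul {x y rr : ℝ} (h : x < rr * y) (hx : 0 ≤ x) (hr : 0 ≤ rr) :
    x ^ 2 < rr ^ 2 * y ^ 2 := by nlinarith

lemma card_bound {n m s : ℝ} (h1 : n ≤ m) (h2 : 0 ≤ s) (h3 : s ≤ 1) (hn : 0 ≤ n) :
    n * s ≤ m + 1 := by nlinarith

lemma minus_ineq {a v x Y : ℝ} (h1 : a ^ 2 + v ^ 2 < 1) (h2 : x ^ 2 + Y ^ 2 < 1) :
    (a - x) ^ 2 + (v - -Y) ^ 2
      < 1 ^ 2 * ((1 - a * x - v * -Y) ^ 2 + (a * -Y - v * x) ^ 2) := by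
  nlinarith [mul_pos (show (0:ℝ) < 1 - (a ^ 2 + v ^ 2) by linarith)
    (show (0:ℝ) < 1 - (x ^ 2 + Y ^ 2) by linarith)]

lemma final_bound {rr e s t ρ : ℝ} (hr0 : 0 < rr) (hs0 : 0 ≤ s) (hs : s < rr ^ 2)
    (ht0 : 0 ≤ t) (ht : t < 1 ^ 2) (hege : -1 ≤ e) (hele : e ≤ 1) (h1pe : 2 + 2 * e < rr ^ 2)
    (hρ : 0 ≤ ρ) (hcombo : ρ ^ 2 = (1 - e) / 2 * s + (1 + e) / 2 * t) : ρ < 4 * rr := by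
  have h1 : (1 - e) / 2 * s ≤ s := by nlinarith
  have h2 : (1 + e) / 2 * t ≤ (1 + e) / 2 := by nlinarith
  have h3 : ρ ^ 2 < rr ^ 2 + rr ^ 2 / 4 := by nlinarith
  nlinarith

lemma e_bounds {x y : ℝ} (hsub : 0 ≤ 2 + 2 * y) (hadd : 0 ≤ 2 - 2 * y) :
    -1 ≤ y ∧ y ≤ 1 := ⟨by linarith, by linarith⟩


end CoveringAux

set_option maxHeartbeats 2000000 in
/-- For every `r ∈ (0,1)` there is a constant `C₅(r)` such that `Δ(α,r)` can be covered by at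
most `C₅(r) d⁻⁴` pseudohyperbolic balls `B(α_j, 4r)` with centers `α_j` in the sphere `[α]`,
where `d = (1−|α|²)^{1/2}` (the cardinality bound `card ≤ C₅ d⁻⁴` is written
`card · d⁴ ≤ C₅`). -/
theorem pDisc_completion_covering (r : ℝ) (hr : r ∈ Set.Ioo (0 : ℝ) 1) :
    ∃ C₅ : ℝ, 0 < C₅ ∧ ∀ I ∈ Sph, ∀ α ∈ B1 ∩ CPlane I,
      ∃ T : Finset ℍ, (↑T : Set ℍ) ⊆ qSphere α ∧
        (T.card : ℝ) * (1 - ‖α‖ ^ 2) ^ 2 ≤ C₅ ∧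
        axComp (pDisc I α r) ⊆ ⋃ β ∈ T, pBall β (4 * r) := by
  classical
  obtain ⟨hr0, hr1⟩ := hr
  -- a finite r-net on the sphere of imaginary units
  have hSc : IsCompact Sph := by
    have hcl : IsClosed Sph := by
      have : Sph = (fun q : ℍ => q ^ 2) ⁻¹' {-1} := rfl
      rw [this]
      exact isClosed_singleton.preimage (continuous_pow 2)
    have hbd : Bornology.IsBounded Sph := by
      apply Bornology.IsBounded.subset (Metric.isBounded_closedBall (x := (0 : ℍ)) (r := 1))
      intro q hq
      have h2 : ‖q‖ ^ 2 = 1 := by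
        have h3 : ‖q ^ 2‖ = 1 := by rw [show q ^ 2 = -1 from hq]; simp
        rwa [norm_pow] at h3
      have h4 := norm_nonneg q
      simp only [Metric.mem_closedBall, dist_zero_right]
      nlinarith
    exact Metric.isCompact_of_isClosed_isBounded hcl hbd
  obtain ⟨N, hNsub, hNcov⟩ := hSc.elim_nhds_subcover (fun K => Metric.ball K r)
    (fun K _ => Metric.ball_mem_nhds K hr0)
  refine ⟨(N.card : ℝ) + 1, by positivity, ?_⟩
  intro I hI α hα
  obtain ⟨hαB, hαP⟩ := hα
  obtain ⟨w, hw⟩ := hαP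
  have hαdef : α = ((w.1 : ℝ) : ℍ) + w.2 • I := by rw [← hw]; rfl
  set xx := w.1
  set yy := w.2
  have hXval : α.re = xx := by rw [hαdef, CoveringAux.mkS_re I hI]
  have hY2 : ‖α.im‖ ^ 2 = yy ^ 2 := by rw [hαdef]; exact CoveringAux.mkS_im_norm_sq I hI xx yy
  have hα1 : ‖α‖ < 1 := by rwa [B1, Metric.mem_ball, dist_zero_right] at hαB
  have hαn : xx ^ 2 + yy ^ 2 < 1 :=
    CoveringAux.sq_lt_self_of_lt_one hα1 (norm_nonneg α)
      (by rw [hαdef, CoveringAux.mkS_norm_sq I hI])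
  have hwXY : xx ^ 2 + ‖α.im‖ ^ 2 < 1 := by rw [hY2]; exact hαn
  refine ⟨N.image (fun K => ((α.re : ℝ) : ℍ) + ‖α.im‖ • K), ?_, ?_, ?_⟩
  · intro β hβ
    simp only [Finset.coe_image, Set.mem_image, Finset.mem_coe] at hβ
    obtain ⟨K, hK, rfl⟩ := hβ
    exact ⟨K, hNsub K hK, rfl⟩
  · have h1 : ((N.image (fun K => ((α.re : ℝ) : ℍ) + ‖α.im‖ • K)).card : ℝ) ≤ (N.card : ℝ) := by
      exact_mod_cast Finset.card_image_le
    have h2 : 0 ≤ (1 - ‖α‖ ^ 2) ^ 2 := sq_nonneg _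
    have h3 : (1 - ‖α‖ ^ 2) ^ 2 ≤ 1 := by
      have hn2 : ‖α‖ ^ 2 < 1 := by nlinarith [norm_nonneg α]
      nlinarith [sq_nonneg ‖α‖]
    exact CoveringAux.card_bound h1 h2 h3 (Nat.cast_nonneg _)
  · rintro q ⟨z, hz, hqre, hqim⟩
    obtain ⟨hzB, hzP, hzlt⟩ := hz
    obtain ⟨p, hp⟩ := hzP
    have hzdef : z = ((p.1 : ℝ) : ℍ) + p.2 • I := by rw [← hp]; rfl
    set a := p.1
    set b := p.2
    have hz1 : ‖z‖ < 1 := by rwa [B1, Metric.mem_ball, dist_zero_right] at hzB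
    have hzn : a ^ 2 + b ^ 2 < 1 :=
      CoveringAux.sq_lt_self_of_lt_one hz1 (norm_nonneg z)
        (by rw [hzdef, CoveringAux.mkS_norm_sq I hI])
    have hqre' : q.re = a := by rw [hqre, hzdef, CoveringAux.mkS_re I hI]
    have hv2 : ‖q.im‖ ^ 2 = b ^ 2 := by
      rw [hqim, hzdef]; exact CoveringAux.mkS_im_norm_sq I hI a b
    have hquv : a ^ 2 + ‖q.im‖ ^ 2 < 1 := by rw [hv2]; exact hzn
    -- decompose q on a slice
    have hJex : ∃ J, J ∈ Sph ∧ q = (a : ℍ) + ‖q.im‖ • J := by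
      by_cases hqi : q.im = 0
      · refine ⟨I, hI, ?_⟩
        have h5 : ((q.re : ℝ) : ℍ) = q := by
          conv_rhs => rw [← Quaternion.re_add_im q, hqi, add_zero]
        rw [hqi, norm_zero, zero_smul, add_zero, ← hqre']
        exact h5.symm
      · refine ⟨‖q.im‖⁻¹ • q.im, CoveringAux.unit_im_mem_sph (Quaternion.re_im (a := q)) hqi, ?_⟩
        rw [smul_smul, mul_inv_cancel₀ (norm_ne_zero_iff.mpr hqi), one_smul, ← hqre']
        exact (Quaternion.re_add_im q).symm
    obtain ⟨J, hJS, hqdec⟩ := hJex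
    have hqB1 : q ∈ B1 := by
      rw [B1, Metric.mem_ball, dist_zero_right]
      exact CoveringAux.lt_one_of_sq (by rw [CoveringAux.norm_sq_decomp, hqre']) hquv
        (norm_nonneg q)
    -- pick a net point near J
    have hJcov := hNcov hJS
    simp only [Set.mem_iUnion, Metric.mem_ball] at hJcov
    obtain ⟨K, hKN, hJK⟩ := hJcov
    have hKS : K ∈ Sph := hNsub K hKN
    set e := (J * K).re with he
    have hsubSq : ‖J - K‖ ^ 2 = 2 + 2 * e := by
      rw [CoveringAux.norm_sq_q, CoveringAux.normSq_sub_sph J K hJS hKS]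
    have h1pe : 2 + 2 * e < r ^ 2 := by
      have h2 : ‖J - K‖ < r := by rwa [dist_eq_norm] at hJK
      have h3 := CoveringAux.sq_lt_of_lt_mul (by linarith : ‖J - K‖ < r * 1)
        (norm_nonneg (J - K)) hr0.le
      rw [hsubSq] at h3
      linarith
    have hege : -1 ≤ e := by
      have h3 := Quaternion.normSq_nonneg (a := J - K)
      rw [CoveringAux.normSq_sub_sph J K hJS hKS] at h3
      linarith
    have hele : e ≤ 1 := by
      have h3 := Quaternion.normSq_nonneg (a := J + K)
      rw [CoveringAux.normSq_add_sph J K hJS hKS] at h3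
      linarith
    -- the slice inequality from pDisc, in coordinates
    have hnum : ‖z - α‖ ^ 2 = (a - xx) ^ 2 + (b - yy) ^ 2 := by
      rw [hzdef, hαdef, CoveringAux.mkS_sub, CoveringAux.mkS_norm_sq I hI]
    have hden : ‖1 - z * star α‖ ^ 2
        = (1 - a * xx - b * yy) ^ 2 + (a * yy - b * xx) ^ 2 := by
      rw [hzdef, hαdef, CoveringAux.one_sub_mul_star I hI, CoveringAux.mkS_norm_sq I hI]
    have hsq : ‖z - α‖ ^ 2 < r ^ 2 * ‖1 - z * star α‖ ^ 2 :=
      CoveringAux.sq_lt_of_lt_mul hzlt (norm_nonneg _) hr0.le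
    rw [hnum, hden] at hsq
    -- reflect to nonnegative imaginary parts
    have hby : b * yy ≤ ‖q.im‖ * ‖α.im‖ := by
      have h1 : (‖q.im‖ * ‖α.im‖) ^ 2 = (b * yy) ^ 2 := by rw [mul_pow, mul_pow, hv2, hY2]
      have h2 : 0 ≤ ‖q.im‖ * ‖α.im‖ := mul_nonneg (norm_nonneg _) (norm_nonneg _)
      rcases sq_eq_sq_iff_eq_or_eq_neg.mp h1 with h | h
      · exact le_of_eq h.symm
      · linarith [h.symm.le]
    have href := CoveringAux.reflect_real hr0.le hr1.le hv2 hY2 hby hsq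
    have hrp : pRho ((a : ℍ) + ‖q.im‖ • J) ((xx : ℍ) + ‖α.im‖ • J) ^ 2 < r ^ 2 :=
      CoveringAux.pRho_slice_lt J hJS a ‖q.im‖ xx ‖α.im‖ r hquv hwXY href
    have hw' : xx ^ 2 + (-‖α.im‖) ^ 2 < 1 := by
      rw [show ((-‖α.im‖ : ℝ)) ^ 2 = ‖α.im‖ ^ 2 by ring]; exact hwXY
    have hminus : (a - xx) ^ 2 + (‖q.im‖ - -‖α.im‖) ^ 2
        < 1 ^ 2 * ((1 - a * xx - ‖q.im‖ * -‖α.im‖) ^ 2 + (a * -‖α.im‖ - ‖q.im‖ * xx) ^ 2) :=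
      CoveringAux.minus_ineq hquv hwXY
    have hrm : pRho ((a : ℍ) + ‖q.im‖ • J) ((xx : ℍ) + (-‖α.im‖) • J) ^ 2 < 1 ^ 2 :=
      CoveringAux.pRho_slice_lt J hJS a ‖q.im‖ xx (-‖α.im‖) 1 hquv hw' hminus
    have hcombo := CoveringAux.pRho_sq_combo J K hJS hKS a ‖q.im‖ xx ‖α.im‖
    have hfin : pRho ((a : ℍ) + ‖q.im‖ • J) ((xx : ℍ) + ‖α.im‖ • K) < 4 * r :=
      CoveringAux.final_bound hr0 (sq_nonneg _) hrp (sq_nonneg _) hrm hege hele h1pe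
        (CoveringAux.pRho_nonneg _ _) hcombo
    refine Set.mem_iUnion₂.mpr ⟨((α.re : ℝ) : ℍ) + ‖α.im‖ • K, ?_, ?_⟩
    · exact Finset.mem_image.mpr ⟨K, hKN, rfl⟩
    · refine ⟨hqB1, ?_⟩
      rw [hqdec, hXval]
      exact hfin

end
end

section
/- Let p > 0 and fix i ∈ 𝕊. The 2-dimensional Lebesgue measure λ_i on 𝔹_i = 𝔹 ∩ ℂ_i, regarded as a Borel measure on 𝔹, is a Carleson measure for 𝒜^p(𝔹), and yet for every r ∈ (0,1) there is a constant c(r) > 0 such that λ_i(B(α,r)) ≥ c(r)·d⁴ for every α ∈ 𝔹_i, where d = (1 − |α|²)^{1/2}; hence for no exponent β > 4 can every Carleson measure μ for 𝒜^p(𝔹) satisfy μ(B(α,r)) ≤ C(r)·d^β for all α ∈ 𝔹. -/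
open MeasureTheory Filter Set
open scoped ENNReal

noncomputable section

open ComplexConjugate

lemma sph_re_s18 {i : ℍ} (hi : i ∈ Sph) : i.re = 0 := by
  have h : i * i = -1 := by rw [← sq]; exact hi
  have h1 := congrArg QuaternionAlgebra.re h
  have h2 := congrArg QuaternionAlgebra.imI h
  have h3 := congrArg QuaternionAlgebra.imJ h
  have h4 := congrArg QuaternionAlgebra.imK h
  simp [Quaternion.re_mul, Quaternion.imI_mul, Quaternion.imJ_mul, Quaternion.imK_mul,
    Quaternion.re_one, Quaternion.imI_one, Quaternion.imJ_one, Quaternion.imK_one] at h1 h2 h3 h4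
  have key : i.re ^ 2 = 0 := by nlinarith [sq_nonneg i.re, sq_nonneg i.imI, sq_nonneg i.imJ, sq_nonneg i.imK]
  exact pow_eq_zero_iff (two_ne_zero) |>.mp key

lemma sph_sumsq {i : ℍ} (hi : i ∈ Sph) : i.imI ^ 2 + i.imJ ^ 2 + i.imK ^ 2 = 1 := by
  have h : i * i = -1 := by rw [← sq]; exact hi
  have h1 := congrArg QuaternionAlgebra.re h
  simp [Quaternion.re_mul, sph_re_s18 hi, Quaternion.re_one] at h1
  nlinarith [h1]

noncomputable def sHom (i : ℍ) (hi : i ∈ Sph) : ℂ →+* ℍ where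
  toFun z := (z.re : ℍ) + z.im • i
  map_one' := by simp
  map_zero' := by simp
  map_add' z w := by
    simp only [Complex.add_re, Complex.add_im, Quaternion.coe_add, add_smul]
    abel
  map_mul' z w := by
    have hre := sph_re_s18 hi
    have hs := sph_sumsq hi
    ext <;>
      simp [Quaternion.re_mul, Quaternion.imI_mul, Quaternion.imJ_mul, Quaternion.imK_mul,
        Complex.mul_re, Complex.mul_im, hre] <;> ring_nf <;> linear_combination (z.im * w.im) * hs

lemma sHom_apply {i : ℍ} (hi : i ∈ Sph) (z : ℂ) : sHom i hi z = (z.re : ℍ) + z.im • i := by simp [sHom]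

lemma toSlice_eq_sHom {i : ℍ} (hi : i ∈ Sph) (z : ℝ × ℝ) :
    toSlice i z = sHom i hi ⟨z.1, z.2⟩ := by simp [sHom, toSlice]

lemma sHom_real {i : ℍ} (hi : i ∈ Sph) (r : ℝ) : sHom i hi (r : ℂ) = (r : ℍ) := by
  simp [sHom_apply]

lemma re_sHom {i : ℍ} (hi : i ∈ Sph) (z : ℂ) : (sHom i hi z).re = z.re := by
  simp [sHom_apply, sph_re_s18 hi]

lemma normSq_sHom {i : ℍ} (hi : i ∈ Sph) (z : ℂ) :
    Quaternion.normSq (sHom i hi z) = z.re ^ 2 + z.im ^ 2 := by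
  have hre := sph_re_s18 hi
  have hs := sph_sumsq hi
  rw [Quaternion.normSq_def']
  simp [sHom_apply, hre]
  ring_nf
  nlinarith [hs]

lemma norm_sHom {i : ℍ} (hi : i ∈ Sph) (z : ℂ) : ‖sHom i hi z‖ = ‖z‖ := by
  have h1 : ‖sHom i hi z‖ * ‖sHom i hi z‖ = ‖z‖ * ‖z‖ := by
    rw [← Quaternion.normSq_eq_norm_mul_self, normSq_sHom hi, ← sq,
      Complex.sq_norm, Complex.normSq_apply]
    ring
  calc ‖sHom i hi z‖ = Real.sqrt (‖sHom i hi z‖ * ‖sHom i hi z‖) := (Real.sqrt_mul_self (norm_nonneg _)).symm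
    _ = Real.sqrt (‖z‖ * ‖z‖) := by rw [h1]
    _ = ‖z‖ := Real.sqrt_mul_self (norm_nonneg _)

lemma star_sHom {i : ℍ} (hi : i ∈ Sph) (z : ℂ) :
    star (sHom i hi z) = sHom i hi (conj z) := by
  have hneg : star i = -i := Quaternion.star_eq_neg.mpr (sph_re_s18 hi)
  simp [sHom_apply, star_add, star_smul, hneg, Complex.conj_re, Complex.conj_im, smul_neg, neg_smul]


lemma ofReal_normSq (w : ℂ) : ((‖w‖ ^ 2 : ℝ) : ℂ) = w * conj w := by
  rw [Complex.mul_conj, Complex.sq_norm]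

lemma pRho_slice {i : ℍ} (hi : i ∈ Sph) (z w : ℂ) (hz : ‖z‖ < 1) (hw : ‖w‖ < 1) :
    pRho (sHom i hi z) (sHom i hi w) = ‖z - w‖ / ‖1 - z * conj w‖ := by
  set φ := sHom i hi with hφ
  have hzw : (1 : ℂ) - z * w ≠ 0 := by
    intro h
    have h1 : z * w = 1 := by linear_combination -h
    have : ‖z * w‖ < 1 := by
      rw [norm_mul]
      nlinarith [norm_nonneg z, norm_nonneg w]
    rw [h1] at this; simp at this
  have hzcw : (1 : ℂ) - z * conj w ≠ 0 := by
    intro h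
    have h1 : z * conj w = 1 := by linear_combination -h
    have : ‖z * conj w‖ < 1 := by
      rw [norm_mul, RCLike.norm_conj]
      nlinarith [norm_nonneg z, norm_nonneg w]
    rw [h1] at this; simp at this
  have hsm : ∀ (r : ℝ) (u : ℍ), r • u = (r : ℍ) * u := fun r u => (Quaternion.coe_mul_eq_smul r u).symm
  have hA : 1 - (2 * (φ w).re) • (φ z) + (‖φ w‖ ^ 2) • (φ z) ^ 2
      = φ ((1 - z * conj w) * (1 - z * w)) := by
    rw [hsm, hsm, re_sHom hi, norm_sHom hi, ← sHom_real hi (2 * w.re), ← sHom_real hi (‖w‖ ^ 2)]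
    rw [← map_pow, ← map_mul, ← map_mul, ← map_one φ, ← map_sub, ← map_add]
    congr 1
    have h1 : ((2 * w.re : ℝ) : ℂ) = w + conj w := (Complex.add_conj w).symm
    push_cast only [] at h1
    rw [h1, ofReal_normSq]
    ring
  have hB : -(φ w) + (φ z) * (1 + (φ w) ^ 2) - (φ z) ^ 2 * (φ w)
      = φ ((1 - z * w) * (z - w)) := by
    rw [← map_pow, ← map_pow, ← map_one φ, ← map_add, ← map_mul, ← map_mul, ← map_neg,
      ← map_add, ← map_sub]
    congr 1
    ring
  unfold pRho
  rw [hA, hB, ← map_inv₀, ← map_mul, norm_sHom hi]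
  have : ((1 - z * conj w) * (1 - z * w))⁻¹ * ((1 - z * w) * (z - w)) = (z - w) / (1 - z * conj w) := by
    field_simp
  rw [this, norm_div]

lemma sph_ne_zero {i : ℍ} (hi : i ∈ Sph) : i ≠ 0 := by
  intro h
  have := sph_sumsq hi
  rw [h] at this
  simp [Quaternion.imI_zero, Quaternion.imJ_zero, Quaternion.imK_zero] at this

noncomputable def sliceLin (i : ℍ) : (ℝ × ℝ) →ₗ[ℝ] ℍ where
  toFun z := toSlice i z
  map_add' z w := by
    simp only [toSlice, Prod.fst_add, Prod.snd_add, Quaternion.coe_add, add_smul]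
    abel
  map_smul' c z := by
    simp only [toSlice, Prod.smul_fst, Prod.smul_snd, smul_eq_mul, RingHom.id_apply, smul_add,
      Quaternion.coe_mul, mul_smul]
    congr 1
    rw [Quaternion.coe_mul_eq_smul]

lemma toSlice_me {i : ℍ} (hi : i ∈ Sph) : MeasurableEmbedding (toSlice i) := by
  have hre := sph_re_s18 hi
  have hker : LinearMap.ker (sliceLin i) = ⊥ := by
    rw [LinearMap.ker_eq_bot]
    intro z w h
    have h1 := congrArg QuaternionAlgebra.re h
    simp only [sliceLin, LinearMap.coe_mk, AddHom.coe_mk, toSlice] at h1 h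
    simp only [Quaternion.re_add, Quaternion.re_coe, Quaternion.re_smul, smul_eq_mul, hre,
      mul_zero, add_zero] at h1
    have h2 : z.2 • i = w.2 • i := by
      have := h
      rw [h1] at this
      exact add_left_cancel this
    have h3 : (z.2 - w.2) • i = 0 := by rw [sub_smul, h2, sub_self]
    rcases smul_eq_zero.mp h3 with h4 | h4
    · exact Prod.ext h1 (by linarith [sub_eq_zero.mp (by linarith : z.2 - w.2 = 0)])
    · exact absurd h4 (sph_ne_zero hi)
  exact (LinearMap.isClosedEmbedding_of_injective hker).measurableEmbedding

lemma preim_B1 {i : ℍ} (hi : i ∈ Sph) : toSlice i ⁻¹' B1 = unitDisc2 := by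
  ext z
  have hn : ‖toSlice i z‖ * ‖toSlice i z‖ = z.1 ^ 2 + z.2 ^ 2 := by
    rw [← Quaternion.normSq_eq_norm_mul_self, toSlice_eq_sHom hi, normSq_sHom hi]
  simp only [B1, unitDisc2, mem_preimage, Metric.mem_ball, dist_zero_right, Set.mem_setOf_eq]
  constructor
  · intro h; nlinarith [norm_nonneg (toSlice i z)]
  · intro h; nlinarith [norm_nonneg (toSlice i z)]

lemma B1_meas : MeasurableSet B1 := Metric.isOpen_ball.measurableSet

lemma unitDisc2_meas : MeasurableSet unitDisc2 := by
  have : IsOpen unitDisc2 := by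
    have : Continuous fun z : ℝ × ℝ => z.1 ^ 2 + z.2 ^ 2 := by fun_prop
    exact isOpen_lt this continuous_const
  exact this.measurableSet

lemma sliceLeb_finite {i : ℍ} (hi : i ∈ Sph) : IsFiniteMeasure (sliceLeb i) := by
  constructor
  rw [sliceLeb, Measure.restrict_apply_univ, (toSlice_me hi).map_apply, preim_B1 hi]
  have hsub : unitDisc2 ⊆ Set.Ioo (-1 : ℝ) 1 ×ˢ Set.Ioo (-1 : ℝ) 1 := by
    intro z hz
    simp only [unitDisc2, Set.mem_setOf_eq] at hz
    constructor <;> constructor <;> nlinarith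
  calc volume unitDisc2 ≤ volume (Set.Ioo (-1 : ℝ) 1 ×ˢ Set.Ioo (-1 : ℝ) 1) := measure_mono hsub
    _ = ENNReal.ofReal 2 * ENNReal.ofReal 2 := by
        rw [Measure.volume_eq_prod, Measure.prod_prod, Real.volume_Ioo]
        norm_num
    _ < ⊤ := by finiteness

lemma sliceLeb_compl {i : ℍ} : sliceLeb i B1ᶜ = 0 := by
  rw [sliceLeb, Measure.restrict_apply B1_meas.compl, compl_inter_self, measure_empty]

lemma sliceLeb_lintegral {i : ℍ} (hi : i ∈ Sph) (g : ℍ → ℝ≥0∞) :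
    ∫⁻ q in B1, g q ∂(sliceLeb i) = ∫⁻ z in unitDisc2, g (toSlice i z) := by
  rw [sliceLeb, Measure.restrict_restrict B1_meas, Set.inter_self,
    ← lintegral_indicator B1_meas, (toSlice_me hi).lintegral_map]
  have h : ∀ z, B1.indicator g (toSlice i z) = unitDisc2.indicator (fun z => g (toSlice i z)) z := by
    intro z
    by_cases h : toSlice i z ∈ B1
    · rw [Set.indicator_of_mem h, Set.indicator_of_mem (by rwa [← preim_B1 hi])]
    · rw [Set.indicator_of_notMem h, Set.indicator_of_notMem (by rwa [← preim_B1 hi])]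
  simp_rw [h]
  rw [lintegral_indicator unitDisc2_meas]

lemma pBall_lower {i : ℍ} (hi : i ∈ Sph) (r : ℝ) (hr : r ∈ Set.Ioo (0 : ℝ) 1) :
    ∃ c : ℝ, 0 < c ∧ ∀ α ∈ B1 ∩ CPlane i,
      ENNReal.ofReal (c * (1 - ‖α‖ ^ 2) ^ 2) ≤ sliceLeb i (pBall α r) := by
  obtain ⟨hr0, hr1⟩ := hr
  set δ : ℝ := r / (1 + r) with hδdef
  have hδ0 : 0 < δ := by positivity
  have hδr : δ * (1 + r) = r := by
    rw [hδdef]; exact div_mul_cancel₀ r (by linarith : (1:ℝ) + r ≠ 0)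
  have hδ : δ < 1 / 2 := by rw [hδdef, div_lt_iff₀ (by linarith)]; linarith
  refine ⟨δ ^ 2, by positivity, ?_⟩
  rintro α ⟨hαB, w', hw'⟩
  set w : ℂ := ⟨w'.1, w'.2⟩ with hwdef
  have hαφ : α = sHom i hi w := by rw [← hw', toSlice_eq_sHom hi]
  have hαn : ‖α‖ = ‖w‖ := by rw [hαφ, norm_sHom]
  have hw1 : ‖w‖ < 1 := by
    rw [← hαn]
    exact mem_ball_zero_iff.mp hαB
  have hw2 : 0 < 1 - ‖w‖ ^ 2 := by nlinarith [norm_nonneg w]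
  set s : ℝ := δ * (1 - ‖w‖ ^ 2) with hsdef
  have hs : 0 < s := by positivity
  set Q : Set (ℝ × ℝ) :=
    Set.Ioo (w'.1 - s / 2) (w'.1 + s / 2) ×ˢ Set.Ioo (w'.2 - s / 2) (w'.2 + s / 2) with hQdef
  have hQ : Q ⊆ toSlice i ⁻¹' (pBall α r) := by
    rintro z' ⟨hz1, hz2⟩
    set z : ℂ := ⟨z'.1, z'.2⟩ with hzdef
    have hzφ : toSlice i z' = sHom i hi z := toSlice_eq_sHom hi z'
    have hzw : ‖z - w‖ < s := by
      have h1 : |z'.1 - w'.1| < s / 2 := abs_lt.mpr ⟨by linarith [hz1.1], by linarith [hz1.2]⟩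
      have h2 : |z'.2 - w'.2| < s / 2 := abs_lt.mpr ⟨by linarith [hz2.1], by linarith [hz2.2]⟩
      calc ‖z - w‖ = ‖z - w‖ := rfl
        _ ≤ |(z - w).re| + |(z - w).im| := Complex.norm_le_abs_re_add_abs_im _
        _ = |z'.1 - w'.1| + |z'.2 - w'.2| := rfl
        _ < s := by linarith
    have htri := norm_add_le w (z - w)
    rw [add_sub_cancel] at htri
    have hδw : δ * (1 + ‖w‖) < 1 := by nlinarith [norm_nonneg w]
    have hlt1 : δ * (1 - ‖w‖ ^ 2) < 1 - ‖w‖ := by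
      nlinarith [mul_pos (show (0:ℝ) < 1 - ‖w‖ by nlinarith [norm_nonneg w])
        (show (0:ℝ) < 1 - δ * (1 + ‖w‖) by linarith)]
    have hz1' : ‖z‖ < 1 := by linarith [htri, hzw]
    have hkey : ((1 - ‖w‖ ^ 2 : ℝ) : ℂ) - (z - w) * conj w = 1 - z * conj w := by
      rw [Complex.ofReal_sub, Complex.ofReal_one, ofReal_normSq]; ring
    have hlb : (1 - ‖w‖ ^ 2) - ‖z - w‖ * ‖w‖ ≤ ‖1 - z * conj w‖ := by
      calc (1 - ‖w‖ ^ 2) - ‖z - w‖ * ‖w‖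
          = ‖((1 - ‖w‖ ^ 2 : ℝ) : ℂ)‖ - ‖(z - w) * conj w‖ := by
            rw [norm_mul, RCLike.norm_conj, Complex.norm_real, Real.norm_eq_abs,
              abs_of_pos hw2]
        _ ≤ ‖((1 - ‖w‖ ^ 2 : ℝ) : ℂ) - (z - w) * conj w‖ := norm_sub_norm_le _ _
        _ = ‖1 - z * conj w‖ := by rw [hkey]
    have hsw : ‖z - w‖ * ‖w‖ < s := by
      calc ‖z - w‖ * ‖w‖ ≤ ‖z - w‖ * 1 := mul_le_mul_of_nonneg_left hw1.le (norm_nonneg _)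
        _ = ‖z - w‖ := mul_one _
        _ < s := hzw
    have hpos : 0 < ‖1 - z * conj w‖ := by nlinarith
    have hfinal : ‖z - w‖ < r * ‖1 - z * conj w‖ := by
      nlinarith [mul_le_mul_of_nonneg_left hlb hr0.le, mul_lt_mul_of_pos_left hsw hr0]
    refine ⟨?_, ?_⟩
    · rw [hzφ]
      exact mem_ball_zero_iff.mpr (by rw [norm_sHom]; exact hz1')
    · rw [hzφ, hαφ, pRho_slice hi z w hz1' hw1, div_lt_iff₀ hpos]
      exact hfinal
  have hmeas : sliceLeb i (pBall α r) = volume (toSlice i ⁻¹' pBall α r) := by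
    rw [sliceLeb, Measure.restrict_apply' B1_meas,
      Set.inter_eq_self_of_subset_left (fun q hq => hq.1), (toSlice_me hi).map_apply]
  have e1 : w'.1 + s / 2 - (w'.1 - s / 2) = s := by ring
  have e2 : w'.2 + s / 2 - (w'.2 - s / 2) = s := by ring
  calc ENNReal.ofReal (δ ^ 2 * (1 - ‖α‖ ^ 2) ^ 2) = ENNReal.ofReal s * ENNReal.ofReal s := by
        rw [← ENNReal.ofReal_mul hs.le]
        congr 1
        rw [hαn, hsdef]; ring
    _ = volume Q := by
        rw [hQdef, Measure.volume_eq_prod, Measure.prod_prod, Real.volume_Ioo, Real.volume_Ioo,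
          e1, e2]
    _ ≤ volume (toSlice i ⁻¹' pBall α r) := measure_mono hQ
    _ = sliceLeb i (pBall α r) := hmeas.symm


/-- The 2-dimensional Lebesgue measure `λ_i` on `𝔹_i`, viewed as a Borel measure on `𝔹`, is a
(finite) Carleson measure for `𝒜^p(𝔹)` with `λ_i(B(α,r)) ≥ c(r) d⁴` for `α ∈ 𝔹_i`; hence no
exponent `β > 4` can make `μ(B(α,r)) ≤ C(r) d^β` hold for every Carleson measure `μ`. -/
theorem exponent_four_sharp (p : ℝ) (hp : 0 < p) (i : ℍ) (hi : i ∈ Sph) :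
    IsFiniteMeasure (sliceLeb i) ∧ sliceLeb i B1ᶜ = 0 ∧ IsCarlesonBerg (sliceLeb i) p ∧
    (∀ r ∈ Set.Ioo (0 : ℝ) 1, ∃ c : ℝ, 0 < c ∧ ∀ α ∈ B1 ∩ CPlane i,
      ENNReal.ofReal (c * (1 - ‖α‖ ^ 2) ^ 2) ≤ sliceLeb i (pBall α r)) ∧
    ∀ β : ℝ, 4 < β →
      ¬ ∀ μ : Measure ℍ, IsFiniteMeasure μ → μ B1ᶜ = 0 → IsCarlesonBerg μ p →
        ∀ r ∈ Set.Ioo (0 : ℝ) 1, ∃ C : ℝ, 0 < C ∧ ∀ α ∈ B1,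
          μ (pBall α r) ≤ ENNReal.ofReal (C * (1 - ‖α‖ ^ 2) ^ (β / 2)) := by
  have h1 := sliceLeb_finite hi
  have h2 : sliceLeb i B1ᶜ = 0 := sliceLeb_compl
  have h3 : IsCarlesonBerg (sliceLeb i) p := by
    refine ⟨1, one_pos, fun f _ => ?_⟩
    rw [sliceLeb_lintegral hi, ENNReal.ofReal_one, one_mul]
    exact le_iSup₂ (f := fun I _ => sliceIntP f p I) i hi
  have h4 : ∀ r ∈ Set.Ioo (0 : ℝ) 1, ∃ c : ℝ, 0 < c ∧ ∀ α ∈ B1 ∩ CPlane i,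
      ENNReal.ofReal (c * (1 - ‖α‖ ^ 2) ^ 2) ≤ sliceLeb i (pBall α r) :=
    fun r hr => pBall_lower hi r hr
  refine ⟨h1, h2, h3, h4, ?_⟩
  intro β hβ H
  obtain ⟨C, hC, hCb⟩ := H (sliceLeb i) h1 h2 h3 (1/2) ⟨by norm_num, by norm_num⟩
  obtain ⟨c, hc, hcb⟩ := h4 (1/2) ⟨by norm_num, by norm_num⟩
  set γ : ℝ := β / 2 - 2 with hγdef
  have hγ : 0 < γ := by rw [hγdef]; linarith
  set v : ℝ := (c / (2 * C)) ^ (γ⁻¹) with hvdef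
  have hv : 0 < v := Real.rpow_pos_of_pos (by positivity) _
  set u : ℝ := min (1/2) v with hudef
  have hu0 : 0 < u := lt_min (by norm_num) hv
  have hu1 : u < 1 := lt_of_le_of_lt (min_le_left _ _) (by norm_num)
  set t : ℝ := Real.sqrt (1 - u) with htdef
  have ht0 : 0 ≤ t := Real.sqrt_nonneg _
  have ht2 : t ^ 2 = 1 - u := Real.sq_sqrt (by linarith)
  have ht1 : t < 1 := by nlinarith
  set α : ℍ := ((t : ℝ) : ℍ) with hαdef
  have hαB : α ∈ B1 := by
    rw [hαdef]
    exact mem_ball_zero_iff.mpr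
      (by rw [Quaternion.norm_coe, Real.norm_eq_abs, abs_of_nonneg ht0]; exact ht1)
  have hαC : α ∈ CPlane i := ⟨(t, 0), by simp [toSlice, hαdef]⟩
  have hn : 1 - ‖α‖ ^ 2 = u := by
    rw [hαdef, Quaternion.norm_coe, Real.norm_eq_abs, sq_abs, ht2]; ring
  have lower := hcb α ⟨hαB, hαC⟩
  have upper := hCb α hαB
  rw [hn] at lower upper
  have hineq : c * u ^ 2 ≤ C * u ^ (β / 2) :=
    (ENNReal.ofReal_le_ofReal_iff (by positivity)).mp (le_trans lower upper)
  have hsplit : u ^ (β / 2) = u ^ γ * u ^ 2 := by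
    rw [show (β / 2) = γ + 2 by rw [hγdef]; ring, Real.rpow_add hu0]
    congr 1
    rw [show ((2 : ℝ)) = ((2 : ℕ) : ℝ) by norm_num, Real.rpow_natCast]
  set D : ℝ := c / (2 * C) with hDdef
  have hD : 2 * C * D = c := by
    rw [hDdef]; field_simp
  have huγ : u ^ γ ≤ D := by
    calc u ^ γ ≤ v ^ γ := Real.rpow_le_rpow hu0.le (min_le_right _ _) hγ.le
      _ = D := by
        rw [hvdef, ← Real.rpow_mul (by positivity), inv_mul_cancel₀ hγ.ne', Real.rpow_one]
  rw [hsplit] at hineq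
  nlinarith [mul_le_mul_of_nonneg_left huγ (by positivity : (0:ℝ) ≤ C * u ^ 2), hD, hineq,
    pow_pos hu0 2, hc, hC]


end
end
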